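/- Let C be an m-uniform clutter on [n] such that the determinantal facet ideal J_C is linearly presented. If σ₁, σ₂ are cliques of C with |σ₁ ∩ σ₂| ≥ m−1, then σ₁ ∪ σ₂ is a clique of C. -/

import Mathlib

open MvPolynomial DirectSum

open MvPolynomial DirectSum

section Frame

variable (K : Type) [Field K] (σ : Type) [Fintype σ] [DecidableEq σ]

/-- The degree `j` homogeneous component of the polynomial ring (`⊥` for negative `j`). -/
noncomputable def piece (j : ℤ) : AddSubgroup (MvPolynomial σ K) :=
  if 0 ≤ j then (homogeneousSubmodule σ K j.toNat).toAddSubgroup else ⊥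

/-- The graded free module `⊕_j S(-j)^{β j}`. -/
abbrev FreeMod (β : ℤ → ℕ) : Type :=
  ⨁ (j : ℤ), (Fin (β j) → MvPolynomial σ K)

/-- The degree `t` homogeneous component of `FreeMod β`. -/
noncomputable def fpiece (β : ℤ → ℕ) (t : ℤ) : AddSubgroup (FreeMod K σ β) where
  carrier := {x | ∀ (j : ℤ) (k : Fin (β j)), x j k ∈ piece K σ (t - j)}
  zero_mem' := by
    intro j k
    simp only [DirectSum.zero_apply, Pi.zero_apply]
    exact (piece K σ _).zero_mem
  add_mem' := by
    intro a b ha hb j k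
    have : (a + b) j k = a j k + b j k := by
      rw [DirectSum.add_apply, Pi.add_apply]
    rw [this]
    exact (piece K σ _).add_mem (ha j k) (hb j k)
  neg_mem' := by
    intro a ha j k
    have : (-a) j k = -(a j k) := by
      exact DFinsupp.neg_apply a j ▸ Pi.neg_apply _ k
    rw [this]
    exact (piece K σ _).neg_mem (ha j k)

/-- A minimal graded free resolution of the module `N` with grading `deg`. -/
structure MinFreeRes (N : Type) [AddCommGroup N] [Module (MvPolynomial σ K) N]
    (deg : ℤ → AddSubgroup N) where
  β : ℕ → ℤ → ℕ
  hfin : ∀ i, (Function.support (β i)).Finite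
  d : (i : ℕ) → FreeMod K σ (β (i + 1)) →ₗ[MvPolynomial σ K] FreeMod K σ (β i)
  aug : FreeMod K σ (β 0) →ₗ[MvPolynomial σ K] N
  graded_d : ∀ i t x, x ∈ fpiece K σ (β (i + 1)) t → d i x ∈ fpiece K σ (β i) t
  graded_aug : ∀ t x, x ∈ fpiece K σ (β 0) t → aug x ∈ deg t
  aug_surj : Function.Surjective aug
  exact_aug : LinearMap.ker aug = LinearMap.range (d 0)
  exact : ∀ i, LinearMap.ker (d i) = LinearMap.range (d (i + 1))
  minimal : ∀ i x (j : ℤ) (k : Fin (β i j)), constantCoeff ((d i x) j k) = 0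

/-- The natural grading on an ideal of the polynomial ring. -/
noncomputable def idealDeg (I : Ideal (MvPolynomial σ K)) (t : ℤ) : AddSubgroup I :=
  (piece K σ t).comap (I.subtype.toAddMonoidHom)

variable {K σ}

/-- The linear-strand differential of a minimal graded free resolution, for modules with
initial degree `dd`: the component of `d i` from the twist `i+1+dd` summand to the
twist `i+dd` summand. -/
noncomputable def strandD {N : Type} [AddCommGroup N] [Module (MvPolynomial σ K) N]
    {deg : ℤ → AddSubgroup N} (R : MinFreeRes K σ N deg) (dd : ℤ) (i : ℕ) :
    (Fin (R.β (i + 1) (((i + 1 : ℕ) : ℤ) + dd)) → MvPolynomial σ K) →ₗ[MvPolynomial σ K]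
      (Fin (R.β i ((i : ℤ) + dd)) → MvPolynomial σ K) :=
  (component (MvPolynomial σ K) ℤ _ ((i : ℤ) + dd)) ∘ₗ (R.d i) ∘ₗ
    (lof (MvPolynomial σ K) ℤ (fun j => Fin (R.β (i + 1) j) → MvPolynomial σ K) (((i + 1 : ℕ) : ℤ) + dd))

end Frame

section FrameEN

variable (R : Type) [CommRing R] (m n : ℕ)

/-- The ambient module of the Eagon-Northcott complex of an `m × n` matrix: the free
module with basis `b(σ; a)` indexed by pairs of a subset `σ ⊆ [n]` and a multi-index
`a : Fin m → ℕ`. -/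
abbrev ENMod : Type := (Finset (Fin n) × (Fin m → ℕ)) →₀ R

/-- The Eagon-Northcott differential for the matrix `α`:
`∂(b(σ;a)) = ∑_{j ∈ σ} ∑_{ℓ} (-1)^{|{v ∈ σ : v < j}|} α_{ℓ j} b(σ∖{j}; a - e_ℓ)`,
where terms with `a_ℓ = 0` are zero. -/
noncomputable def ENd (α : Matrix (Fin m) (Fin n) R) : ENMod R m n →ₗ[R] ENMod R m n :=
  Finsupp.lsum R fun p => LinearMap.toSpanSingleton R (ENMod R m n)
    (∑ j ∈ p.1, ∑ ℓ : Fin m,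
      if p.2 ℓ ≠ 0 then
        ((-1 : R) ^ (p.1.filter (fun v => v < j)).card * α ℓ j) •
          Finsupp.single (p.1.erase j, Function.update p.2 ℓ (p.2 ℓ - 1)) (1 : R)
      else 0)

/-- The `i`-th term `C_i(Δ; φ)` of the generalized Eagon-Northcott complex attached to a
simplicial complex `Δ`, as a submodule of `ENMod`: it is spanned by the basis elements
`b(σ; a)` with `σ ∈ Δ`, `|σ| = m + i` and `|a| = i`. -/
noncomputable def ENpart (Δ : Set (Finset (Fin n))) (i : ℕ) : Submodule R (ENMod R m n) :=
  Submodule.span R {x | ∃ (σ : Finset (Fin n)) (a : Fin m → ℕ), σ ∈ Δ ∧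
    σ.card = m + i ∧ (∑ ℓ, a ℓ) = i ∧ x = Finsupp.single (σ, a) (1 : R)}

end FrameEN

section FrameDFI

variable (K : Type) [Field K] (m n : ℕ)

/-- The generic `m × n` matrix of indeterminates. -/
noncomputable def genMatrix : Matrix (Fin m) (Fin n) (MvPolynomial (Fin m × Fin n) K) :=
  fun l j => MvPolynomial.X (l, j)

/-- The maximal minor of an `m × n` matrix `A` on the columns in `τ` (a set of
cardinality `m`), taken in increasing order. -/
noncomputable def minorOn {R : Type} [CommRing R] (A : Matrix (Fin m) (Fin n) R)
    (τ : Finset (Fin n)) (h : τ.card = m) : R :=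
  (A.submatrix id (fun k => ((τ.orderIsoOfFin h k) : Fin n))).det

/-- The determinantal facet ideal of a clutter `C`: the ideal generated by the maximal
minors of the generic matrix whose column sets are the circuits of `C`. -/
noncomputable def detFacetIdeal (C : Set (Finset (Fin n))) :
    Ideal (MvPolynomial (Fin m × Fin n) K) :=
  Ideal.span {f | ∃ τ ∈ C, ∃ h : τ.card = m, f = minorOn m n (genMatrix K m n) τ h}

/-- The clique complex of an `m`-uniform clutter: faces are the sets all of whose
`m`-subsets are circuits. -/
def cliqueComplex (C : Set (Finset (Fin n))) : Set (Finset (Fin n)) :=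
  {σ | ∀ τ ⊆ σ, τ.card = m → τ ∈ C}

/-- The generalized Eagon-Northcott complex `C(Δ; φ)` (for `φ` given by the generic
matrix) is isomorphic, as a complex of graded modules, to the linear strand of the
minimal graded free resolution `Res`. -/
def ENIsLinearStrand {N : Type} [AddCommGroup N]
    [Module (MvPolynomial (Fin m × Fin n) K) N] {deg : ℤ → AddSubgroup N}
    (Δ : Set (Finset (Fin n))) (Res : MinFreeRes K (Fin m × Fin n) N deg) : Prop :=
  ∃ e : (i : ℕ) → (ENpart (MvPolynomial (Fin m × Fin n) K) m n Δ i
      ≃ₗ[MvPolynomial (Fin m × Fin n) K]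
      (Fin (Res.β i ((i : ℤ) + m)) → MvPolynomial (Fin m × Fin n) K)),
    (∀ (i : ℕ) (t : ℤ) (x : ENpart (MvPolynomial (Fin m × Fin n) K) m n Δ i),
      ((∀ p, (x : ENMod (MvPolynomial (Fin m × Fin n) K) m n) p
          ∈ piece K (Fin m × Fin n) (t - p.1.card)) ↔
        (∀ k, e i x k ∈ piece K (Fin m × Fin n) (t - ((i : ℤ) + m))))) ∧
    (∀ (i : ℕ) (x : ENpart (MvPolynomial (Fin m × Fin n) K) m n Δ (i + 1))
        (y : ENpart (MvPolynomial (Fin m × Fin n) K) m n Δ i),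
      (y : ENMod (MvPolynomial (Fin m × Fin n) K) m n) =
        ENd (MvPolynomial (Fin m × Fin n) K) m n (genMatrix K m n)
          (x : ENMod (MvPolynomial (Fin m × Fin n) K) m n) →
      strandD Res (m : ℤ) i (e (i + 1) x) = e i y)

end FrameDFI

namespace DFIGlue

open MvPolynomial Finset

noncomputable section

variable (K : Type) [Field K] (m n : ℕ)

/-- The polynomial ring. -/
abbrev PR := MvPolynomial (Fin m × Fin n) K

variable {m n} in
/-- column-multidegree weight -/
def colw : Fin m × Fin n → (Fin n →₀ ℕ) := fun p => Finsupp.single p.2 1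

/-- multidegree of a set of columns -/
def ew {n : ℕ} (τ : Finset (Fin n)) : Fin n →₀ ℕ := ∑ j ∈ τ, Finsupp.single j 1

lemma ew_apply {n : ℕ} (τ : Finset (Fin n)) (j : Fin n) :
    ew τ j = if j ∈ τ then 1 else 0 := by
  rw [ew, Finsupp.finset_sum_apply]
  rw [Finset.sum_congr rfl (fun j' _ => Finsupp.single_apply)]
  exact Finset.sum_ite_eq' τ j (fun _ => 1)

lemma ew_injective {n : ℕ} {τ τ' : Finset (Fin n)} (h : ew τ = ew τ') : τ = τ' := by
  ext j
  have := congrArg (fun f => f j) h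
  simp only [ew_apply] at this
  by_cases hj : j ∈ τ <;> by_cases hj' : j ∈ τ' <;> simp [hj, hj'] at this ⊢

lemma ew_mono {n : ℕ} {τ τ' : Finset (Fin n)} (h : τ ⊆ τ') : ew τ ≤ ew τ' := by
  intro j
  rw [ew_apply, ew_apply]
  by_cases hj : j ∈ τ
  · simp [hj, h hj]
  · simp [hj]

lemma mem_of_ew_le {n : ℕ} {τ : Finset (Fin n)} {D : Fin n →₀ ℕ} (h : ew τ ≤ D)
    {j : Fin n} (hj : j ∈ τ) : 0 < D j := by
  have := h j
  rw [ew_apply, if_pos hj] at this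
  omega

lemma ew_insert {n : ℕ} {τ : Finset (Fin n)} {j : Fin n} (hj : j ∉ τ) :
    ew (insert j τ) = ew τ + Finsupp.single j 1 := by
  rw [ew, ew, Finset.sum_insert hj, add_comm]

variable {K}

lemma prod_X {α : Type} (s : Finset α) (v : α → Fin m × Fin n) :
    (∏ k ∈ s, (X (v k) : PR K m n)) = monomial (∑ k ∈ s, Finsupp.single (v k) 1) 1 := by
  classical
  induction s using Finset.cons_induction with
  | empty => simp [monomial_zero']
  | cons a s ha ih =>
    rw [Finset.prod_cons, Finset.sum_cons, ih, X, monomial_mul, one_mul]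

variable (K)

/-- the circuit minor -/
def mnr (τ : Finset (Fin n)) (h : τ.card = m) : PR K m n :=
  minorOn m n (genMatrix K m n) τ h

/-- the columns of a minor, in increasing order -/
def cols (τ : Finset (Fin n)) (h : τ.card = m) : Fin m → Fin n :=
  fun k => ((τ.orderIsoOfFin h k) : Fin n)

lemma cols_mem (τ : Finset (Fin n)) (h : τ.card = m) (k : Fin m) : cols m n τ h k ∈ τ :=
  (τ.orderIsoOfFin h k).2

lemma cols_injective (τ : Finset (Fin n)) (h : τ.card = m) :
    Function.Injective (cols m n τ h) := by
  intro a b hab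
  exact (τ.orderIsoOfFin h).injective (Subtype.ext hab)

lemma cols_surj (τ : Finset (Fin n)) (h : τ.card = m) {j : Fin n} (hj : j ∈ τ) :
    ∃ k, cols m n τ h k = j :=
  ⟨(τ.orderIsoOfFin h).symm ⟨j, hj⟩, by
    simp [cols]⟩

lemma sum_cols {M : Type} [AddCommMonoid M] (τ : Finset (Fin n)) (h : τ.card = m)
    (g : Fin n → M) : (∑ i : Fin m, g (cols m n τ h i)) = ∑ j ∈ τ, g j := by
  apply Finset.sum_bij (fun i _ => cols m n τ h i)
  · intro a _; exact cols_mem m n τ h a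
  · intro a _ b _ hab; exact cols_injective m n τ h hab
  · intro j hj
    obtain ⟨k, hk⟩ := cols_surj m n τ h hj
    exact ⟨k, Finset.mem_univ k, hk⟩
  · intro a _; rfl

lemma mnr_eq_sum (τ : Finset (Fin n)) (h : τ.card = m) :
    mnr K m n τ h = ∑ π : Equiv.Perm (Fin m),
      Equiv.Perm.sign π • ∏ i : Fin m, (X ((π i, cols m n τ h i)) : PR K m n) := by
  rw [mnr, minorOn, Matrix.det_apply]
  rfl

lemma mnr_weighted (τ : Finset (Fin n)) (h : τ.card = m) :
    IsWeightedHomogeneous colw (mnr K m n τ h) (ew τ) := by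
  rw [← mem_weightedHomogeneousSubmodule, mnr_eq_sum]
  apply Submodule.sum_mem
  intro π _
  have hmem : (∏ i : Fin m, (X ((π i, cols m n τ h i)) : PR K m n))
      ∈ weightedHomogeneousSubmodule K colw (ew τ) := by
    rw [mem_weightedHomogeneousSubmodule]
    have hew : ew τ = ∑ i : Fin m, colw ((π i, cols m n τ h i)) := by
      simp only [colw]
      rw [sum_cols m n τ h (fun j => Finsupp.single j 1)]
      rfl
    rw [hew]
    exact IsWeightedHomogeneous.prod Finset.univ _ _ (fun i _ => isWeightedHomogeneous_X K colw _)
  rw [Units.smul_def]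
  have hz := (weightedHomogeneousSubmodule K colw (ew τ)).toAddSubgroup.zsmul_mem
    (by rwa [Submodule.mem_toAddSubgroup]) ((Equiv.Perm.sign π : ℤ))
  rwa [Submodule.mem_toAddSubgroup] at hz

lemma mnr_homogeneous (τ : Finset (Fin n)) (h : τ.card = m) :
    (mnr K m n τ h).IsHomogeneous m := by
  rw [mnr_eq_sum]
  rw [← mem_homogeneousSubmodule]
  apply Submodule.sum_mem
  intro π _
  have hmem : (∏ i : Fin m, (X ((π i, cols m n τ h i)) : PR K m n))
      ∈ homogeneousSubmodule (Fin m × Fin n) K m := by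
    rw [mem_homogeneousSubmodule]
    have hh : (∏ i : Fin m, (X ((π i, cols m n τ h i)) : PR K m n)).IsHomogeneous
        (∑ _i : Fin m, 1) :=
      IsHomogeneous.prod Finset.univ _ _ (fun i _ => isHomogeneous_X K _)
    simpa using hh
  rw [Units.smul_def]
  have hz := (homogeneousSubmodule (Fin m × Fin n) K m).toAddSubgroup.zsmul_mem
    (by rwa [Submodule.mem_toAddSubgroup]) ((Equiv.Perm.sign π : ℤ))
  rwa [Submodule.mem_toAddSubgroup] at hz

/-- the diagonal exponent of a minor -/
def diagm (τ : Finset (Fin n)) (h : τ.card = m) : (Fin m × Fin n) →₀ ℕ :=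
  ∑ i : Fin m, Finsupp.single ((i, cols m n τ h i)) 1

lemma weight_sum_single {α : Type} (s : Finset α) (v : α → Fin m × Fin n) :
    (Finsupp.weight colw) (∑ k ∈ s, Finsupp.single (v k) 1) = ∑ k ∈ s, colw (v k) := by
  rw [map_sum]
  apply Finset.sum_congr rfl
  intro k _
  rw [Finsupp.weight_apply, Finsupp.sum_single_index]
  · rw [one_smul]
  · rw [zero_smul]

lemma weight_diagm (τ : Finset (Fin n)) (h : τ.card = m) :
    (Finsupp.weight colw) (diagm m n τ h) = ew τ := by
  rw [diagm, weight_sum_single]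
  simp only [colw]
  rw [sum_cols m n τ h (fun j => Finsupp.single j 1)]
  rfl

lemma coeff_diag_self (τ : Finset (Fin n)) (h : τ.card = m) :
    coeff (diagm m n τ h) (mnr K m n τ h) = 1 := by
  classical
  rw [mnr_eq_sum]
  rw [coeff_sum]
  have key : ∀ π : Equiv.Perm (Fin m),
      coeff (diagm m n τ h) (Equiv.Perm.sign π • ∏ i : Fin m, (X ((π i, cols m n τ h i)) : PR K m n))
        = if π = 1 then 1 else 0 := by
    intro π
    rw [coeff_smul, prod_X, coeff_monomial]
    by_cases hπ : π = 1
    · subst hπ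
      rw [if_pos, if_pos rfl]
      · simp
      · rfl
    · rw [if_neg, if_neg hπ]
      · simp
      · -- exponents differ
        intro hD
        apply hπ
        have : ∃ i, π i ≠ i := by
          by_contra hcon
          push_neg at hcon
          exact hπ (Equiv.ext hcon)
        obtain ⟨i, hi⟩ := this
        exfalso
        simp only [diagm] at hD
        have happ := congrArg (fun f => f ((π i, cols m n τ h i))) hD
        beta_reduce at happ
        rw [Finsupp.finset_sum_apply, Finsupp.finset_sum_apply] at happ
        have hL : (∑ i' : Fin m, (Finsupp.single ((π i', cols m n τ h i')) 1)
            ((π i, cols m n τ h i))) = 1 := by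
          rw [Finset.sum_eq_single i]
          · rw [Finsupp.single_apply, if_pos rfl]
          · intro b _ hb
            rw [Finsupp.single_apply, if_neg]
            intro hcon
            apply hb
            have := congrArg Prod.snd hcon
            simp only at this
            exact cols_injective m n τ h this
          · intro hmem; exact absurd (Finset.mem_univ i) hmem
        have hR : (∑ i' : Fin m, (Finsupp.single ((i', cols m n τ h i')) 1)
            ((π i, cols m n τ h i))) = 0 := by
          apply Finset.sum_eq_zero
          intro b _
          rw [Finsupp.single_apply, if_neg]
          intro hcon
          have h2 := congrArg Prod.snd hcon
          simp only at h2
          have hb : b = i := cols_injective m n τ h h2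
          have h1 := congrArg Prod.fst hcon
          simp only at h1
          exact hi (h1.symm.trans hb)
        rw [hL, hR] at happ
        exact one_ne_zero happ
  rw [Finset.sum_congr rfl (fun π _ => key π)]
  rw [Finset.sum_ite_eq' Finset.univ (1 : Equiv.Perm (Fin m)) (fun _ => (1 : K))]
  rw [if_pos (Finset.mem_univ _)]

lemma mnr_ne_zero (τ : Finset (Fin n)) (h : τ.card = m) : mnr K m n τ h ≠ 0 := by
  intro hcon
  have := coeff_diag_self K m n τ h
  rw [hcon, coeff_zero] at this
  exact one_ne_zero this.symm

lemma coeff_diag_other (τ τ' : Finset (Fin n)) (h : τ.card = m) (h' : τ'.card = m)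
    (hne : τ ≠ τ') : coeff (diagm m n τ h) (mnr K m n τ' h') = 0 := by
  by_contra hcon
  have hw := mnr_weighted K m n τ' h' hcon
  rw [weight_diagm] at hw
  exact hne (ew_injective hw)

/-- the column substitution `x_{ℓ j₁} ↦ x_{ℓ j₀}` -/
def subst (j₀ j₁ : Fin n) : PR K m n →ₐ[K] PR K m n :=
  aeval (fun p : Fin m × Fin n => if p.2 = j₁ then X ((p.1, j₀)) else X p)

lemma subst_X (j₀ j₁ : Fin n) (p : Fin m × Fin n) :
    subst K m n j₀ j₁ (X p) = if p.2 = j₁ then X ((p.1, j₀)) else X p := by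
  rw [subst, aeval_X]

lemma subst_mnr_zero {τ : Finset (Fin n)} (h : τ.card = m) {j₀ j₁ : Fin n}
    (h₀ : j₀ ∈ τ) (h₁ : j₁ ∈ τ) (hne : j₀ ≠ j₁) :
    subst K m n j₀ j₁ (mnr K m n τ h) = 0 := by
  have hdet : subst K m n j₀ j₁ (mnr K m n τ h) =
      (((genMatrix K m n).submatrix id (fun k => cols m n τ h k)).map
        (subst K m n j₀ j₁)).det := by
    rw [mnr, minorOn]
    exact RingHom.map_det (subst K m n j₀ j₁).toRingHom _
  rw [hdet]
  obtain ⟨k₀, hk₀⟩ := cols_surj m n τ h h₀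
  obtain ⟨k₁, hk₁⟩ := cols_surj m n τ h h₁
  have hkne : k₀ ≠ k₁ := by
    intro hcon
    exact hne (by rw [← hk₀, ← hk₁, hcon])
  apply Matrix.det_zero_of_column_eq hkne
  intro r
  simp only [Matrix.map_apply, Matrix.submatrix_apply, id_eq, genMatrix]
  rw [subst_X, subst_X]
  simp only [hk₀, hk₁]
  simp [hne]

lemma subst_mnr_id {τ : Finset (Fin n)} (h : τ.card = m) {j₀ j₁ : Fin n}
    (h₁ : j₁ ∉ τ) : subst K m n j₀ j₁ (mnr K m n τ h) = mnr K m n τ h := by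
  have hdet : subst K m n j₀ j₁ (mnr K m n τ h) =
      (((genMatrix K m n).submatrix id (fun k => cols m n τ h k)).map
        (subst K m n j₀ j₁)).det := by
    rw [mnr, minorOn]
    exact RingHom.map_det (subst K m n j₀ j₁).toRingHom _
  rw [hdet, mnr, minorOn]
  congr 1
  apply Matrix.ext
  intro r k
  simp only [Matrix.map_apply, Matrix.submatrix_apply, id_eq, genMatrix]
  rw [subst_X, if_neg]
  · rfl
  · intro hcon
    exact h₁ (hcon ▸ cols_mem m n τ h k)

lemma weight_single (p : Fin m × Fin n) :
    (Finsupp.weight (colw (m := m) (n := n))) (Finsupp.single p 1) = colw p := by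
  rw [Finsupp.weight_apply, Finsupp.sum_single_index]
  · rw [one_smul]
  · rw [zero_smul]

lemma degree_one_single {α : Type} [DecidableEq α] (d : α →₀ ℕ) (h : d.degree = 1) :
    ∃ p, d = Finsupp.single p 1 := by
  have hne : d ≠ 0 := fun h0 => by simp [h0, map_zero] at h
  obtain ⟨p, hp⟩ := Finsupp.support_nonempty_iff.mpr hne
  have hdp : d p = 1 := le_antisymm (h ▸ Finsupp.le_degree p d) (by
    have := Finsupp.mem_support_iff.mp hp; omega)
  refine ⟨p, Finsupp.ext fun q => ?_⟩
  rw [Finsupp.single_apply]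
  by_cases hq : p = q
  · subst hq; rw [if_pos rfl]; exact hdp
  · rw [if_neg hq]
    by_contra hq0
    have hqs : q ∈ d.support := Finsupp.mem_support_iff.mpr hq0
    have hsub : ({p, q} : Finset α) ⊆ d.support := by
      intro x hx; rcases Finset.mem_insert.mp hx with rfl | hx
      · exact hp
      · rw [Finset.mem_singleton.mp hx]; exact hqs
    have h2 : d p + d q ≤ d.degree := by
      rw [Finsupp.degree]
      calc d p + d q = ∑ x ∈ ({p, q} : Finset α), d x := by
            rw [Finset.sum_insert (by simp [hq]), Finset.sum_singleton]
        _ ≤ _ := Finset.sum_le_sum_of_subset hsub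
    omega

/-- nonzero bihomogeneous linear forms are supported on a single column -/
lemma pure_support {u : PR K m n} {W : Fin n →₀ ℕ} (hdeg : u.IsHomogeneous 1)
    (hw : IsWeightedHomogeneous colw u W) (hne : u ≠ 0) :
    ∃ j' : Fin n, W = Finsupp.single j' 1 ∧
      ∀ d ∈ u.support, ∃ ℓ : Fin m, d = Finsupp.single ((ℓ, j')) 1 := by
  classical
  have hstep : ∀ d ∈ u.support, ∃ p : Fin m × Fin n,
      d = Finsupp.single p 1 ∧ W = Finsupp.single p.2 1 := by
    intro d hd
    have hcoeff : coeff d u ≠ 0 := by rwa [MvPolynomial.mem_support_iff] at hd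
    have hdege : d.degree = 1 := by
      have := hdeg hcoeff
      change (Finsupp.weight (fun _ => 1)) d = 1 at this
      rwa [← Finsupp.degree_eq_weight_one] at this
    obtain ⟨p, hp⟩ := degree_one_single d hdege
    refine ⟨p, hp, ?_⟩
    have hwd := hw hcoeff
    rw [hp, weight_single] at hwd
    rw [← hwd]; rfl
  have hsupp : u.support.Nonempty :=
    Finset.nonempty_iff_ne_empty.mpr (fun h => hne (MvPolynomial.support_eq_empty.mp h))
  obtain ⟨d₀, hd₀⟩ := hsupp
  obtain ⟨p₀, hp₀, hW₀⟩ := hstep d₀ hd₀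
  refine ⟨p₀.2, hW₀, ?_⟩
  intro d hd
  obtain ⟨p, hp, hW⟩ := hstep d hd
  have : p.2 = p₀.2 := by
    have h12 := hW₀.symm.trans hW
    exact (Finsupp.single_left_injective one_ne_zero h12).symm
  exact ⟨p.1, by rw [hp, ← this]⟩

/-- a linear form supported on column `j₁` which is killed by the substitution is zero -/
lemma subst_kill {u : PR K m n} {j₀ j₁ : Fin n}
    (hsupp : ∀ d ∈ u.support, ∃ ℓ : Fin m, d = Finsupp.single ((ℓ, j₁)) 1)
    (h0 : subst K m n j₀ j₁ u = 0) : u = 0 := by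
  classical
  by_contra hne
  obtain ⟨d, hd⟩ := Finset.nonempty_iff_ne_empty.mpr (fun h => hne (MvPolynomial.support_eq_empty.mp h))
  obtain ⟨ℓ, hdl⟩ := hsupp d hd
  have hcoeff : coeff d u ≠ 0 := MvPolynomial.mem_support_iff.mp hd
  have hkey : coeff (Finsupp.single ((ℓ, j₀)) 1) (subst K m n j₀ j₁ u) = coeff d u := by
    conv_lhs => rw [← support_sum_monomial_coeff u]
    rw [map_sum, coeff_sum]
    rw [Finset.sum_eq_single d]
    · rw [hdl]
      have hmon : (monomial (Finsupp.single ((ℓ, j₁)) 1))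
            (coeff (Finsupp.single ((ℓ, j₁)) 1) u) =
          (coeff (Finsupp.single ((ℓ, j₁)) 1) u) • X ((ℓ, j₁)) := by
        rw [X, smul_monomial, smul_eq_mul, mul_one]
      rw [hmon, map_smul, subst_X, if_pos rfl, coeff_smul, coeff_X', if_pos rfl,
        smul_eq_mul, mul_one]
    · intro d' hd' hne'
      obtain ⟨ℓ', hd'l⟩ := hsupp d' hd'
      rw [hd'l]
      have hmon : (monomial (Finsupp.single ((ℓ', j₁)) 1))
            (coeff (Finsupp.single ((ℓ', j₁)) 1) u) =
          (coeff (Finsupp.single ((ℓ', j₁)) 1) u) • X ((ℓ', j₁)) := by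
        rw [X, smul_monomial, smul_eq_mul, mul_one]
      rw [hmon, map_smul, subst_X, if_pos rfl, coeff_smul, coeff_X', if_neg, smul_zero]
      intro hcon
      have hll : ℓ' = ℓ := by
        have h2 := Finsupp.single_left_injective (M := ℕ) one_ne_zero hcon
        exact (Prod.mk.injEq _ _ _ _ |>.mp h2).1
      exact hne' (by rw [hd'l, hdl, hll])
    · intro hd'; exact absurd hd hd'
  rw [h0, coeff_zero] at hkey
  exact hcoeff hkey.symm

/-- weighted component of a product with a weighted-homogeneous factor -/
lemma whc_mul_homog (D E : Fin n →₀ ℕ) (p f : PR K m n)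
    (hf : IsWeightedHomogeneous colw f E) :
    weightedHomogeneousComponent colw D (p * f) =
      if E ≤ D then weightedHomogeneousComponent colw (D - E) p * f else 0 := by
  classical
  have hP := weightedHomogeneousComponent_finsupp (w := colw (m := m) (n := n)) p
  have hpe : p = ∑ W ∈ hP.toFinset, weightedHomogeneousComponent colw W p := by
    rw [← finsum_eq_sum _ hP, sum_weightedHomogeneousComponent]
  have hexp : weightedHomogeneousComponent colw D (p * f) =
      ∑ W ∈ hP.toFinset, (if W + E = D
        then weightedHomogeneousComponent colw W p * f else 0) := by
    conv_lhs => rw [hpe]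
    rw [Finset.sum_mul, map_sum]
    apply Finset.sum_congr rfl
    intro W _
    have hWf : IsWeightedHomogeneous colw
        (weightedHomogeneousComponent colw W p * f) (W + E) :=
      (weightedHomogeneousComponent_isWeightedHomogeneous W p).mul hf
    by_cases hWD : W + E = D
    · rw [if_pos hWD]
      subst hWD
      exact hWf.weightedHomogeneousComponent_same
    · rw [if_neg hWD, hWf.weightedHomogeneousComponent_ne D (fun h => hWD h.symm)]
  rw [hexp]
  by_cases hE : E ≤ D
  · have hconds : ∀ W : Fin n →₀ ℕ, (W + E = D) ↔ (W = D - E) := by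
      intro W
      constructor
      · intro hh
        subst hh
        rw [add_tsub_cancel_right]
      · intro hh
        subst hh
        exact tsub_add_cancel_of_le hE
    rw [if_pos hE]
    rw [Finset.sum_congr rfl (fun W _ => if_congr (hconds W) rfl rfl)]
    rw [Finset.sum_ite_eq' hP.toFinset (D - E)
      (fun W => weightedHomogeneousComponent colw W p * f)]
    by_cases hmem : D - E ∈ hP.toFinset
    · rw [if_pos hmem]
    · rw [if_neg hmem]
      have : weightedHomogeneousComponent colw (D - E) p = 0 := by
        by_contra hne
        exact hmem (hP.mem_toFinset.mpr hne)
      rw [this, zero_mul]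
  · rw [if_neg hE]
    apply Finset.sum_eq_zero
    intro W _
    rw [if_neg]
    intro hcon
    exact hE (hcon ▸ le_add_self)

lemma whc_isHomogeneous {u : PR K m n} {k : ℕ} (h : u.IsHomogeneous k) (W : Fin n →₀ ℕ) :
    ((weightedHomogeneousComponent colw W) u).IsHomogeneous k := by
  classical
  intro d hd
  rw [coeff_weightedHomogeneousComponent] at hd
  by_cases hW : (Finsupp.weight colw) d = W
  · rw [if_pos hW] at hd
    exact h hd
  · rw [if_neg hW] at hd
    exact absurd rfl hd

lemma exists_erase_of_subset {α : Type} [DecidableEq α] {s t : Finset α}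
    (hsub : s ⊆ t) (hc : t.card = s.card + 1) :
    ∃ c ∈ t, c ∉ s ∧ s = t.erase c := by
  have hd : (t \ s).card = 1 := by
    rw [Finset.card_sdiff_of_subset hsub]
    omega
  obtain ⟨c, hcs⟩ := Finset.card_eq_one.mp hd
  have hct : c ∈ t := (Finset.mem_sdiff.mp (hcs ▸ Finset.mem_singleton_self c)).1
  have hcns : c ∉ s := (Finset.mem_sdiff.mp (hcs ▸ Finset.mem_singleton_self c)).2
  refine ⟨c, hct, hcns, ?_⟩
  apply Finset.Subset.antisymm
  · intro x hx
    exact Finset.mem_erase.mpr ⟨fun h => hcns (h ▸ hx), hsub hx⟩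
  · intro x hx
    obtain ⟨hxc, hxt⟩ := Finset.mem_erase.mp hx
    by_contra hxs
    have : x ∈ t \ s := Finset.mem_sdiff.mpr ⟨hxt, hxs⟩
    rw [hcs] at this
    exact hxc (Finset.mem_singleton.mp this)

end

end DFIGlue
namespace DFIGlue

section PhaseII

open MvPolynomial DirectSum

noncomputable section

variable (K : Type) [Field K] (σv : Type) [Fintype σv] [DecidableEq σv]

lemma mem_piece_iff {t : ℤ} (ht : 0 ≤ t) (p : MvPolynomial σv K) :
    p ∈ piece K σv t ↔ p.IsHomogeneous t.toNat := by
  rw [piece, if_pos ht, Submodule.mem_toAddSubgroup, mem_homogeneousSubmodule]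

lemma mem_piece_neg {t : ℤ} (ht : t < 0) {p : MvPolynomial σv K}
    (hp : p ∈ piece K σv t) : p = 0 := by
  rw [piece, if_neg (not_le.mpr ht)] at hp
  exact hp

lemma piece_mul {a b : ℤ} {p q : MvPolynomial σv K} (hp : p ∈ piece K σv a)
    (hq : q ∈ piece K σv b) : p * q ∈ piece K σv (a + b) := by
  by_cases ha : 0 ≤ a
  · by_cases hb : 0 ≤ b
    · rw [mem_piece_iff K σv ha] at hp
      rw [mem_piece_iff K σv hb] at hq
      rw [mem_piece_iff K σv (by omega)]
      have : (a + b).toNat = a.toNat + b.toNat := by omega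
      rw [this]
      exact hp.mul hq
    · rw [mem_piece_neg K σv (by omega) hq, mul_zero]
      exact AddSubgroup.zero_mem _
  · rw [mem_piece_neg K σv (by omega) hp, zero_mul]
    exact AddSubgroup.zero_mem _

lemma piece_smul_constantCoeff {t : ℤ} (ht : t ≠ 0) {p : MvPolynomial σv K}
    (hp : p ∈ piece K σv t) : constantCoeff p = 0 := by
  by_cases h0 : 0 ≤ t
  · rw [mem_piece_iff K σv h0] at hp
    by_contra hc
    have := hp (show coeff 0 p ≠ 0 from by rwa [constantCoeff_eq] at hc)
    rw [map_zero] at this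
    omega
  · rw [mem_piece_neg K σv (by omega) hp, map_zero]

lemma piece_zero_eq_C {p : MvPolynomial σv K} (hp : p ∈ piece K σv (0 : ℤ)) :
    p = C (constantCoeff p) := by
  rw [mem_piece_iff K σv le_rfl] at hp
  ext d
  by_cases hd : d = 0
  · subst hd
    rw [coeff_C, if_pos rfl, constantCoeff_eq]
  · rw [coeff_C, if_neg (fun h => hd h.symm)]
    by_contra hc
    have := hp hc
    change (Finsupp.weight (fun _ => 1)) d = _ at this
    rw [← Finsupp.degree_eq_weight_one] at this
    exact hd (Finsupp.degree_eq_zero_iff d |>.mp (by omega))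

variable {K σv} in
/-- all components have zero constant coefficient -/
def ZC {β : ℤ → ℕ} (x : FreeMod K σv β) : Prop :=
  ∀ (j : ℤ) (k : Fin (β j)), constantCoeff (x j k) = 0

/-- the map out of a graded free module determined by images of the basis vectors -/
def mkMap {β : ℤ → ℕ} {M : Type} [AddCommGroup M] [Module (MvPolynomial σv K) M]
    (g : ∀ j : ℤ, Fin (β j) → M) : FreeMod K σv β →ₗ[MvPolynomial σv K] M :=
  DirectSum.toModule _ ℤ M
    (fun j => Fintype.linearCombination (MvPolynomial σv K) (g j))

lemma mkMap_of {β : ℤ → ℕ} {M : Type} [AddCommGroup M] [Module (MvPolynomial σv K) M]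
    (g : ∀ j : ℤ, Fin (β j) → M) (j : ℤ) (v : Fin (β j) → MvPolynomial σv K) :
    mkMap K σv g (DirectSum.of (fun j => Fin (β j) → MvPolynomial σv K) j v)
      = ∑ k, v k • g j k := by
  rw [← DirectSum.lof_eq_of (MvPolynomial σv K), mkMap, DirectSum.toModule_lof]
  rw [Fintype.linearCombination_apply]

lemma mkMap_single {β : ℤ → ℕ} {M : Type} [AddCommGroup M] [Module (MvPolynomial σv K) M]
    (g : ∀ j : ℤ, Fin (β j) → M) (j : ℤ) (k : Fin (β j)) :
    mkMap K σv g (DirectSum.of (fun j => Fin (β j) → MvPolynomial σv K) j (Pi.single k 1))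
      = g j k := by
  rw [mkMap_of]
  rw [Finset.sum_eq_single k]
  · rw [Pi.single_apply, if_pos rfl, one_smul]
  · intro b _ hb
    rw [Pi.single_apply, if_neg hb, zero_smul]
  · intro h; exact absurd (Finset.mem_univ k) h

lemma mkMap_range {β : ℤ → ℕ} {M : Type} [AddCommGroup M] [Module (MvPolynomial σv K) M]
    (g : ∀ j : ℤ, Fin (β j) → M) :
    LinearMap.range (mkMap K σv g)
      = Submodule.span (MvPolynomial σv K) {x : M | ∃ j k, g j k = x} := by
  apply le_antisymm
  · rintro y ⟨x, rfl⟩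
    refine DirectSum.induction_on x ?_ ?_ ?_
    · rw [map_zero]; exact Submodule.zero_mem _
    · intro j v
      rw [mkMap_of]
      exact Submodule.sum_mem _ (fun k _ =>
        Submodule.smul_mem _ _ (Submodule.subset_span ⟨j, k, rfl⟩))
    · intro x y hx hy
      rw [map_add]; exact Submodule.add_mem _ hx hy
  · rw [Submodule.span_le]
    rintro y ⟨j, k, rfl⟩
    exact ⟨DirectSum.of _ j (Pi.single k 1), mkMap_single K σv g j k⟩

lemma mkMap_graded {β : ℤ → ℕ} {M : Type} [AddCommGroup M] [Module (MvPolynomial σv K) M]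
    (P : ℤ → AddSubgroup M)
    (hP : ∀ (a b : ℤ) (p : MvPolynomial σv K) (y : M),
      p ∈ piece K σv a → y ∈ P b → p • y ∈ P (a + b))
    (g : ∀ j : ℤ, Fin (β j) → M) (hg : ∀ j k, g j k ∈ P j) :
    ∀ (t : ℤ) (x : FreeMod K σv β), x ∈ fpiece K σv β t → mkMap K σv g x ∈ P t := by
  classical
  intro t x hx
  have hxe : x = ∑ j ∈ DFinsupp.support x,
      DirectSum.of (fun j => Fin (β j) → MvPolynomial σv K) j (x j) :=
    (DirectSum.sum_support_of x).symm
  rw [hxe, map_sum]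
  apply AddSubgroup.sum_mem
  intro j _
  rw [mkMap_of]
  apply AddSubgroup.sum_mem
  intro k _
  have := hP (t - j) j (x j k) (g j k) (hx j k) (hg j k)
  rwa [sub_add_cancel] at this

/-- the degree-`d` homogeneous component as an additive map, `0` for negative `d` -/
def pieceComp (d : ℤ) : MvPolynomial σv K →+ MvPolynomial σv K :=
  if 0 ≤ d then (homogeneousComponent d.toNat).toAddMonoidHom else 0

lemma pieceComp_mem (d : ℤ) (p : MvPolynomial σv K) : pieceComp K σv d p ∈ piece K σv d := by
  by_cases hd : 0 ≤ d
  · rw [pieceComp, if_pos hd, mem_piece_iff K σv hd]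
    exact homogeneousComponent_isHomogeneous _ _
  · rw [pieceComp, if_neg hd]
    exact AddSubgroup.zero_mem _

lemma pieceComp_of_mem {t t' : ℤ} {p : MvPolynomial σv K} (hp : p ∈ piece K σv t) :
    pieceComp K σv t' p = if t' = t then p else 0 := by
  by_cases ht : 0 ≤ t
  · rw [mem_piece_iff K σv ht] at hp
    by_cases ht' : 0 ≤ t'
    · rw [pieceComp, if_pos ht', LinearMap.toAddMonoidHom_coe,
        homogeneousComponent_of_mem (mem_homogeneousSubmodule _ _ |>.mpr hp)]
      by_cases heq : t' = t
      · rw [if_pos heq, if_pos (by omega)]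
      · rw [if_neg heq, if_neg (by omega)]
    · rw [pieceComp, if_neg ht', if_neg (by omega)]
      rfl
  · have hp0 : p = 0 := mem_piece_neg K σv (by omega) hp
    subst hp0
    rw [map_zero, ite_self]

variable {β : ℤ → ℕ}

/-- the degree-`t` component of an element of the graded free module -/
def fcomp (t : ℤ) : FreeMod K σv β →+ FreeMod K σv β :=
  DFinsupp.mapRange.addMonoidHom
    (fun j => AddMonoidHom.compLeft (pieceComp K σv (t - j)) (Fin (β j)))

lemma fcomp_apply (t : ℤ) (x : FreeMod K σv β) (j : ℤ) (k : Fin (β j)) :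
    fcomp K σv t x j k = pieceComp K σv (t - j) (x j k) := by
  rfl

lemma fcomp_mem (t : ℤ) (x : FreeMod K σv β) : fcomp K σv t x ∈ fpiece K σv β t := by
  intro j k
  rw [fcomp_apply]
  exact pieceComp_mem K σv _ _

lemma fcomp_of_mem {t t' : ℤ} {x : FreeMod K σv β} (hx : x ∈ fpiece K σv β t) :
    fcomp K σv t' x = if t' = t then x else 0 := by
  apply DFinsupp.ext
  intro j
  funext k
  rw [fcomp_apply, pieceComp_of_mem K σv (hx j k)]
  by_cases heq : t' - j = t - j
  · rw [if_pos heq, if_pos (by omega)]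
  · rw [if_neg heq, if_neg (by omega)]
    rfl

lemma fpiece_unique {t t' : ℤ} {x : FreeMod K σv β} (hx : x ∈ fpiece K σv β t)
    (hx' : x ∈ fpiece K σv β t') (hne : t ≠ t') : x = 0 := by
  have h1 := fcomp_of_mem K σv hx (t' := t')
  have h2 := fcomp_of_mem K σv hx' (t' := t')
  rw [if_neg (Ne.symm hne)] at h1
  rw [if_pos rfl] at h2
  rw [← h2, h1]

lemma fcomp_decomp (x : FreeMod K σv β) :
    ∃ T : Finset ℤ, (∀ t ∉ T, fcomp K σv t x = 0) ∧ x = ∑ t ∈ T, fcomp K σv t x := by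
  classical
  refine DirectSum.induction_on x ⟨∅, fun t _ => map_zero _, by simp⟩ ?_ ?_
  · intro j v
    set maxd := Finset.univ.sup (fun k => (v k).totalDegree) with hmaxd
    set T : Finset ℤ := (Finset.range (maxd + 1)).image (fun d : ℕ => j + (d : ℤ)) with hT
    have hcompall : ∀ t : ℤ, fcomp K σv t (DirectSum.of _ j v)
        = DirectSum.of (fun j => Fin (β j) → MvPolynomial σv K) j
          (fun k => pieceComp K σv (t - j) (v k)) := by
      intro t
      apply DFinsupp.ext
      intro j'
      by_cases hjj : j' = j
      · subst hjj
        funext k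
        rw [fcomp_apply, DirectSum.of_eq_same, DirectSum.of_eq_same]
      · funext k
        rw [fcomp_apply, DirectSum.of_eq_of_ne _ _ _ hjj,
          DirectSum.of_eq_of_ne _ _ _ hjj]
        simp
    refine ⟨T, ?_, ?_⟩
    · intro t ht
      rw [hcompall t]
      have hz : (fun k => pieceComp K σv (t - j) (v k))
          = (0 : Fin (β j) → MvPolynomial σv K) := by
        funext k
        by_cases hneg : 0 ≤ t - j
        · rw [pieceComp, if_pos hneg, LinearMap.toAddMonoidHom_coe]
          apply homogeneousComponent_eq_zero
          have hnotle : ¬ ((t - j).toNat ≤ maxd) := by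
            intro hle
            apply ht
            rw [hT, Finset.mem_image]
            exact ⟨(t - j).toNat, Finset.mem_range.mpr (by omega), by omega⟩
          have hbound : (v k).totalDegree ≤ maxd :=
            Finset.le_sup (f := fun k => (v k).totalDegree) (Finset.mem_univ k)
          omega
        · rw [pieceComp, if_neg hneg]
          rfl
      rw [hz, map_zero]
    · rw [Finset.sum_congr rfl (fun t _ => hcompall t), ← map_sum]
      congr 1
      funext k
      rw [Finset.sum_apply]
      rw [hT, Finset.sum_image (fun a _ b _ h => by omega)]
      have hterm2 : ∀ d ∈ Finset.range (maxd + 1),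
          pieceComp K σv ((j + (d : ℤ)) - j) (v k) = homogeneousComponent d (v k) := by
        intro d _
        rw [show (j + (d : ℤ)) - j = (d : ℤ) by ring, pieceComp,
          if_pos (by positivity), LinearMap.toAddMonoidHom_coe, Int.toNat_natCast]
      rw [Finset.sum_congr rfl hterm2]
      rw [← Finset.sum_subset (Finset.range_subset_range.mpr
        (Nat.succ_le_succ (Finset.le_sup (f := fun k => (v k).totalDegree)
          (Finset.mem_univ k))))]
      · exact (sum_homogeneousComponent (v k)).symm
      · intro d _ hd
        refine homogeneousComponent_eq_zero d (v k) ?_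
        rw [Finset.mem_range] at hd
        have hbeta : ((fun k => (v k).totalDegree) k) = (v k).totalDegree := rfl
        omega
  · rintro x y ⟨T, hT0, hTs⟩ ⟨T', hT'0, hT's⟩
    refine ⟨T ∪ T', ?_, ?_⟩
    · intro t ht
      rw [Finset.mem_union] at ht
      push_neg at ht
      rw [map_add, hT0 t ht.1, hT'0 t ht.2, add_zero]
    · have h1 : ∑ t ∈ T ∪ T', fcomp K σv t (x + y)
          = (∑ t ∈ T ∪ T', fcomp K σv t x) + (∑ t ∈ T ∪ T', fcomp K σv t y) := by
        rw [← Finset.sum_add_distrib]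
        exact Finset.sum_congr rfl (fun t _ => map_add _ _ _)
      rw [h1, ← Finset.sum_subset Finset.subset_union_left
          (fun t _ ht => hT0 t ht),
        ← Finset.sum_subset Finset.subset_union_right (fun t _ ht => hT'0 t ht),
        ← hTs, ← hT's]

lemma fpiece_direct (T : Finset ℤ) (xf : ℤ → FreeMod K σv β)
    (hx : ∀ t ∈ T, xf t ∈ fpiece K σv β t) (hsum : ∑ t ∈ T, xf t = 0) :
    ∀ t₀ ∈ T, xf t₀ = 0 := by
  intro t₀ ht₀
  have h := congrArg (fcomp K σv t₀) hsum
  rw [map_sum, map_zero] at h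
  rw [Finset.sum_congr rfl (fun t ht => fcomp_of_mem K σv (hx t ht))] at h
  rw [Finset.sum_ite_eq T t₀ xf, if_pos ht₀] at h
  exact h

lemma piece_direct (T : Finset ℤ) (pf : ℤ → MvPolynomial σv K)
    (hp : ∀ t ∈ T, pf t ∈ piece K σv t) (hsum : ∑ t ∈ T, pf t = 0) :
    ∀ t₀ ∈ T, pf t₀ = 0 := by
  intro t₀ ht₀
  have h := congrArg (pieceComp K σv t₀) hsum
  rw [map_sum, map_zero] at h
  rw [Finset.sum_congr rfl (fun t ht => pieceComp_of_mem K σv (hp t ht))] at h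
  rw [Finset.sum_ite_eq T t₀ pf, if_pos ht₀] at h
  exact h

lemma fpiece_smul (a b : ℤ) (p : MvPolynomial σv K) (y : FreeMod K σv β)
    (hp : p ∈ piece K σv a) (hy : y ∈ fpiece K σv β b) : p • y ∈ fpiece K σv β (a + b) := by
  intro j k
  have hcomp : (p • y) j k = p * (y j k) := rfl
  rw [hcomp]
  have := piece_mul K σv hp (hy j k)
  rwa [show a + (b - j) = (a + b) - j by ring] at this

end

end PhaseII

end DFIGlue
namespace DFIGlue

section PhaseII2

open MvPolynomial DirectSum Finset

noncomputable section

variable (K : Type) [Field K] (σv : Type) [Fintype σv] [DecidableEq σv]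

lemma freeMod_finite {β : ℤ → ℕ} (hfin : (Function.support β).Finite) :
    Module.Finite (MvPolynomial σv K) (FreeMod K σv β) := by
  classical
  rw [Module.finite_def, Submodule.fg_def]
  refine ⟨{x | ∃ j ∈ hfin.toFinset, ∃ k : Fin (β j),
    DirectSum.of (fun j => Fin (β j) → MvPolynomial σv K) j (Pi.single k 1) = x}, ?_, ?_⟩
  · apply Set.Finite.subset (Set.Finite.biUnion hfin.toFinset.finite_toSet
      (fun j _ => Set.finite_range (fun k : Fin (β j) =>
        DirectSum.of (fun j => Fin (β j) → MvPolynomial σv K) j (Pi.single k 1))))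
    rintro x ⟨j, hj, k, rfl⟩
    exact Set.mem_biUnion hj ⟨k, rfl⟩
  · rw [eq_top_iff]
    rintro x -
    refine DirectSum.induction_on x (Submodule.zero_mem _) ?_
      (fun a b ha hb => Submodule.add_mem _ ha hb)
    intro j v
    by_cases hj : j ∈ hfin.toFinset
    · have hv2 : v = ∑ k : Fin (β j), v k •
          (Pi.single k (1 : MvPolynomial σv K) : Fin (β j) → MvPolynomial σv K) := by
        funext k'
        rw [Finset.sum_apply]
        rw [Finset.sum_eq_single k']
        · rw [Pi.smul_apply, Pi.single_apply, if_pos rfl, smul_eq_mul, mul_one]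
        · intro b _ hb
          rw [Pi.smul_apply, Pi.single_apply, if_neg (Ne.symm hb), smul_eq_mul, mul_zero]
        · intro h; exact absurd (Finset.mem_univ k') h
      have hofv : DirectSum.of (fun j => Fin (β j) → MvPolynomial σv K) j v
          = ∑ k : Fin (β j), v k • DirectSum.of
              (fun j => Fin (β j) → MvPolynomial σv K) j (Pi.single k 1) := by
        rw [← DirectSum.lof_eq_of (MvPolynomial σv K)]
        conv_lhs => rw [hv2]
        rw [map_sum]
        exact Finset.sum_congr rfl (fun k _ => by
          rw [map_smul, DirectSum.lof_eq_of])
      rw [hofv]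
      exact Submodule.sum_mem _ (fun k _ => Submodule.smul_mem _ _
        (Submodule.subset_span ⟨j, hj, k, rfl⟩))
    · have hβ : β j = 0 := by
        by_contra h
        exact hj (hfin.mem_toFinset.mpr h)
      have hv : v = 0 := by
        funext k
        exact absurd k.isLt (by omega)
      rw [hv, map_zero]
      exact Submodule.zero_mem _

lemma extract_irred {M : Type} [AddCommGroup M] [Module (MvPolynomial σv K) M]
    [DecidableEq M] (G : Finset M) :
    ∃ G' : Finset M, (↑G' : Set M) ⊆ ↑G ∧
      Submodule.span (MvPolynomial σv K) (↑G' : Set M)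
        = Submodule.span (MvPolynomial σv K) (↑G : Set M) ∧
      ∀ g ∈ G', g ∉ Submodule.span (MvPolynomial σv K) (↑(G'.erase g) : Set M) := by
  classical
  induction G using Finset.strongInduction with
  | _ G ih =>
    by_cases hred : ∃ g ∈ G, g ∈ Submodule.span (MvPolynomial σv K) (↑(G.erase g) : Set M)
    · obtain ⟨g, hg, hgspan⟩ := hred
      obtain ⟨G', h1, h2, h3⟩ := ih (G.erase g) (Finset.erase_ssubset hg)
      refine ⟨G', h1.trans (by exact_mod_cast Finset.erase_subset g G), ?_, h3⟩
      rw [h2]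
      apply le_antisymm
      · exact Submodule.span_mono (by exact_mod_cast Finset.erase_subset g G)
      · rw [Submodule.span_le]
        intro x hx
        by_cases hxg : x = g
        · subst hxg
          exact hgspan
        · exact Submodule.subset_span (Finset.mem_coe.mpr
            (Finset.mem_erase.mpr ⟨hxg, Finset.mem_coe.mp hx⟩))
    · push_neg at hred
      exact ⟨G, subset_rfl, rfl, hred⟩

set_option maxHeartbeats 2000000 in
theorem stepEx {β : ℤ → ℕ} (hfin : (Function.support β).Finite)
    (Kv : Submodule (MvPolynomial σv K) (FreeMod K σv β))
    (hgr : ∀ x ∈ Kv, ∀ t, fcomp K σv t x ∈ Kv)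
    (hzc : ∀ x ∈ Kv, ZC x) :
    ∃ (β' : ℤ → ℕ) (hfin' : (Function.support β').Finite)
      (g : ∀ j : ℤ, Fin (β' j) → FreeMod K σv β),
      (∀ j k, g j k ∈ fpiece K σv β j) ∧
      (Submodule.span (MvPolynomial σv K) {x | ∃ j k, g j k = x} = Kv) ∧
      (∀ t x, x ∈ fpiece K σv β' t → mkMap K σv g x ∈ fpiece K σv β t) ∧
      (∀ x ∈ LinearMap.ker (mkMap K σv g), ∀ t,
        fcomp K σv t x ∈ LinearMap.ker (mkMap K σv g)) ∧
      (∀ x ∈ LinearMap.ker (mkMap K σv g), ZC x) ∧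
      (LinearMap.range (mkMap K σv g) = Kv) := by
  classical
  haveI := freeMod_finite K σv hfin
  haveI : IsNoetherian (MvPolynomial σv K) (FreeMod K σv β) :=
    isNoetherian_of_isNoetherianRing_of_finite _ _
  obtain ⟨G0, hG0⟩ := IsNoetherian.noetherian Kv
  choose T hT0 hT1 using fun x : FreeMod K σv β => fcomp_decomp K σv x
  set G1 : Finset (FreeMod K σv β) :=
    G0.biUnion (fun x => (T x).image (fun t => fcomp K σv t x)) with hG1
  have hG1span : Submodule.span (MvPolynomial σv K) (↑G1 : Set _) = Kv := by
    apply le_antisymm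
    · rw [Submodule.span_le]
      intro y hy
      rw [Finset.mem_coe, hG1, Finset.mem_biUnion] at hy
      obtain ⟨x, hx, hy⟩ := hy
      obtain ⟨t, _, rfl⟩ := Finset.mem_image.mp hy
      have hxK : x ∈ Kv := by
        rw [← hG0]
        exact Submodule.subset_span (Finset.mem_coe.mpr hx)
      exact hgr x hxK t
    · rw [← hG0, Submodule.span_le]
      intro x hx
      rw [Finset.mem_coe] at hx
      rw [SetLike.mem_coe, hT1 x]
      exact Submodule.sum_mem _ (fun t ht => Submodule.subset_span (Finset.mem_coe.mpr
        (Finset.mem_biUnion.mpr ⟨x, hx, Finset.mem_image.mpr ⟨t, ht, rfl⟩⟩)))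
  have hG1h : ∀ g ∈ G1, ∃ t, g ∈ fpiece K σv β t := by
    intro g hg
    rw [hG1, Finset.mem_biUnion] at hg
    obtain ⟨x, _, hg⟩ := hg
    obtain ⟨t, _, rfl⟩ := Finset.mem_image.mp hg
    exact ⟨t, fcomp_mem K σv t x⟩
  obtain ⟨G', hsub', hspan', hirr⟩ := extract_irred K σv G1
  have hG'span : Submodule.span (MvPolynomial σv K) (↑G' : Set _) = Kv :=
    hspan'.trans hG1span
  have hG'h : ∀ g ∈ G', ∃ t, g ∈ fpiece K σv β t :=
    fun g hg => hG1h g (Finset.mem_coe.mp (hsub' (Finset.mem_coe.mpr hg)))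
  have hG'0 : ∀ g ∈ G', g ≠ 0 := by
    intro g hg h0
    exact hirr g hg (h0 ▸ Submodule.zero_mem _)
  choose dg hdg using fun g : {x // x ∈ G'} => hG'h g.1 g.2
  have huniq : ∀ (g : FreeMod K σv β) (hg : g ∈ G') (j : ℤ),
      g ∈ fpiece K σv β j → j = dg ⟨g, hg⟩ := by
    intro g hg j hj
    by_contra hne
    exact hG'0 g hg (fpiece_unique K σv hj (hdg ⟨g, hg⟩) hne)
  set β' : ℤ → ℕ := fun j => (G'.filter (fun x => x ∈ fpiece K σv β j)).card with hβ'
  have hfin' : (Function.support β').Finite := by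
    apply Set.Finite.subset (Set.finite_range (fun g : {x // x ∈ G'} => dg g))
    intro j hj
    have : (G'.filter (fun x => x ∈ fpiece K σv β j)).Nonempty := by
      rw [← Finset.card_pos]
      exact Nat.pos_of_ne_zero hj
    obtain ⟨g, hg⟩ := this
    obtain ⟨hgG, hgp⟩ := Finset.mem_filter.mp hg
    exact ⟨⟨g, hgG⟩, (huniq g hgG j hgp).symm⟩
  set gf : ∀ j : ℤ, Fin (β' j) → FreeMod K σv β :=
    fun j k => ((G'.filter (fun x => x ∈ fpiece K σv β j)).equivFin.symm k : _) with hgf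
  have hgmem : ∀ j k, gf j k ∈ G' ∧ gf j k ∈ fpiece K σv β j := by
    intro j k
    exact Finset.mem_filter.mp ((G'.filter (fun x => x ∈ fpiece K σv β j)).equivFin.symm k).2
  have hgset : {x | ∃ j k, gf j k = x} = (↑G' : Set _) := by
    ext x
    constructor
    · rintro ⟨j, k, rfl⟩
      exact Finset.mem_coe.mpr (hgmem j k).1
    · intro hx
      have hxG : x ∈ G' := Finset.mem_coe.mp hx
      have hxf : x ∈ G'.filter (fun y => y ∈ fpiece K σv β (dg ⟨x, hxG⟩)) :=
        Finset.mem_filter.mpr ⟨hxG, hdg ⟨x, hxG⟩⟩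
      refine ⟨dg ⟨x, hxG⟩,
        (G'.filter (fun y => y ∈ fpiece K σv β (dg ⟨x, hxG⟩))).equivFin ⟨x, hxf⟩, ?_⟩
      rw [hgf]
      simp
  have hgne : ∀ (j : ℤ) (k : Fin (β' j)) (j' : ℤ) (k' : Fin (β' j')),
      gf j k = gf j' k' → j = j' := by
    intro j k j' k' heq
    by_contra hne
    exact hG'0 _ (hgmem j k).1 (fpiece_unique K σv (hgmem j k).2 (heq ▸ (hgmem j' k').2) hne)
  have hkinj : ∀ (j : ℤ) (k k' : Fin (β' j)), gf j k = gf j k' → k = k' := by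
    intro j k k' heq
    have h2 : (G'.filter (fun x => x ∈ fpiece K σv β j)).equivFin.symm k
        = (G'.filter (fun x => x ∈ fpiece K σv β j)).equivFin.symm k' :=
      Subtype.coe_injective heq
    exact (G'.filter (fun x => x ∈ fpiece K σv β j)).equivFin.symm.injective h2
  have hgraded : ∀ t x, x ∈ fpiece K σv β' t → mkMap K σv gf x ∈ fpiece K σv β t := by
    intro t x hx
    refine mkMap_graded K σv (fun s => fpiece K σv β s) ?_ gf
      (fun j k => (hgmem j k).2) t x hx
    intro a b p y hp hy
    exact fpiece_smul K σv a b p y hp hy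
  have hkerg : ∀ x ∈ LinearMap.ker (mkMap K σv gf), ∀ t,
      fcomp K σv t x ∈ LinearMap.ker (mkMap K σv gf) := by
    intro x hx t
    obtain ⟨Tx, hTx0, hTx1⟩ := fcomp_decomp K σv x
    have hxt : ∀ s ∈ Tx, mkMap K σv gf (fcomp K σv s x) ∈ fpiece K σv β s :=
      fun s _ => hgraded s _ (fcomp_mem K σv s x)
    have hsum : ∑ s ∈ Tx, mkMap K σv gf (fcomp K σv s x) = 0 := by
      rw [← map_sum, ← hTx1]
      exact LinearMap.mem_ker.mp hx
    have hzero := fpiece_direct K σv Tx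
      (fun s => mkMap K σv gf (fcomp K σv s x)) hxt hsum
    by_cases ht : t ∈ Tx
    · exact LinearMap.mem_ker.mpr (hzero t ht)
    · rw [hTx0 t ht]
      exact Submodule.zero_mem _
  have hhomzc : ∀ (s : ℤ) (z : FreeMod K σv β'), z ∈ fpiece K σv β' s →
      mkMap K σv gf z = 0 → ZC z := by
    intro s z hz hker j₀ k₀
    by_contra hc0
    have hmem := hz j₀ k₀
    have hsj : s - j₀ = 0 := by
      by_contra hne
      exact hc0 (piece_smul_constantCoeff K σv hne hmem)
    have hconst : z j₀ k₀ = C (constantCoeff (z j₀ k₀)) :=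
      piece_zero_eq_C K σv (by rw [← hsj]; exact hmem)
    have hXz : (0 : FreeMod K σv β)
        = ∑ j ∈ DFinsupp.support z, ∑ k, (z j k) • gf j k := by
      rw [← hker]
      have hze : z = ∑ j ∈ DFinsupp.support z,
          DirectSum.of (fun j => Fin (β' j) → MvPolynomial σv K) j (z j) :=
        (DirectSum.sum_support_of z).symm
      conv_lhs => rw [hze]
      rw [map_sum]
      exact Finset.sum_congr rfl (fun j _ => mkMap_of K σv gf j (z j))
    have hj₀supp : j₀ ∈ DFinsupp.support z := by
      rw [DFinsupp.mem_support_iff]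
      intro h0
      apply hc0
      have hz0 : z j₀ k₀ = 0 := by rw [h0]; rfl
      rw [hz0, map_zero]
    rw [← Finset.add_sum_erase _ _ hj₀supp,
      ← Finset.add_sum_erase _ (fun k => z j₀ k • gf j₀ k) (Finset.mem_univ k₀)] at hXz
    set Rest := Submodule.span (MvPolynomial σv K)
      (↑(G'.erase (gf j₀ k₀)) : Set (FreeMod K σv β)) with hRest
    have hrest_mem : (∑ k ∈ Finset.univ.erase k₀, z j₀ k • gf j₀ k)
        + ∑ j ∈ (DFinsupp.support z).erase j₀, ∑ k, (z j k) • gf j k ∈ Rest := by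
      apply Submodule.add_mem
      · refine Submodule.sum_mem _ (fun k hk => Submodule.smul_mem _ _
          (Submodule.subset_span (Finset.mem_coe.mpr ?_)))
        refine Finset.mem_erase.mpr ⟨?_, (hgmem j₀ k).1⟩
        intro heq
        exact (Finset.mem_erase.mp hk).1 (hkinj j₀ k k₀ heq)
      · refine Submodule.sum_mem _ (fun j hj => Submodule.sum_mem _ (fun k _ =>
          Submodule.smul_mem _ _ (Submodule.subset_span (Finset.mem_coe.mpr ?_))))
        refine Finset.mem_erase.mpr ⟨?_, (hgmem j k).1⟩
        intro heq
        exact (Finset.mem_erase.mp hj).1 (hgne j k j₀ k₀ heq)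
    have h0 : z j₀ k₀ • gf j₀ k₀ + ((∑ k ∈ Finset.univ.erase k₀, z j₀ k • gf j₀ k)
        + ∑ j ∈ (DFinsupp.support z).erase j₀, ∑ k, (z j k) • gf j k) = 0 := by
      rw [← add_assoc]
      exact hXz.symm
    have h1 : z j₀ k₀ • gf j₀ k₀ ∈ Rest := by
      rw [eq_neg_of_add_eq_zero_left h0]
      exact Submodule.neg_mem _ hrest_mem
    have hg0 : gf j₀ k₀ ∈ Rest := by
      have h2 : (C (constantCoeff (z j₀ k₀)) : MvPolynomial σv K) • gf j₀ k₀ ∈ Rest := by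
        rw [← hconst]
        exact h1
      have h3 : gf j₀ k₀ = (C ((constantCoeff (z j₀ k₀))⁻¹) : MvPolynomial σv K)
          • ((C (constantCoeff (z j₀ k₀)) : MvPolynomial σv K) • gf j₀ k₀) := by
        rw [smul_smul, ← C_mul, inv_mul_cancel₀ hc0, C_1, one_smul]
      rw [h3]
      exact Submodule.smul_mem _ _ h2
    exact hirr _ (hgmem j₀ k₀).1 hg0
  have hkerzc : ∀ x ∈ LinearMap.ker (mkMap K σv gf), ZC x := by
    intro x hx j k
    obtain ⟨Tx, hTx0, hTx1⟩ := fcomp_decomp K σv x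
    have hxcomp : x j k = ∑ s ∈ Tx, (fcomp K σv s x) j k := by
      conv_lhs => rw [hTx1]
      rw [DFinsupp.finset_sum_apply, Finset.sum_apply]
    rw [hxcomp, map_sum]
    apply Finset.sum_eq_zero
    intro s hs
    exact hhomzc s (fcomp K σv s x) (fcomp_mem K σv s x)
      (LinearMap.mem_ker.mp (hkerg x hx s)) j k
  exact ⟨β', hfin', gf, fun j k => (hgmem j k).2, by rw [hgset]; exact hG'span,
    hgraded, hkerg, hkerzc, by rw [mkMap_range, hgset]; exact hG'span⟩

end

end PhaseII2

end DFIGlue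
namespace DFIGlue

open MvPolynomial Finset

noncomputable section

variable (K : Type) [Field K] (m n : ℕ)

variable (C : Set (Finset (Fin n))) (hC : ∀ c ∈ C, c.card = m)

instance : Fintype ↥C := (Set.toFinite C).fintype

/-- the family of circuit minors -/
def fm (i : ↥C) : PR K m n := mnr K m n i.1 (hC i.1 i.2)

/-- the augmentation onto the DFI, valued in the ring -/
def augV : (↥C → PR K m n) →ₗ[PR K m n] PR K m n :=
  Fintype.linearCombination (PR K m n) (fm K m n C hC)

/-- linear syzygies -/
def linSyz : Set (↥C → PR K m n) :=
  {g | g ∈ LinearMap.ker (augV K m n C hC) ∧ ∀ i, (g i).IsHomogeneous 1}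


/-- multigraded piece extraction on syzygy vectors -/
def thd (D : Fin n →₀ ℕ) : (↥C → PR K m n) →+ (↥C → PR K m n) where
  toFun v := fun i =>
    if ew i.1 ≤ D then weightedHomogeneousComponent colw (D - ew i.1) (v i) else 0
  map_zero' := by
    funext i
    by_cases h : ew i.1 ≤ D <;> simp [h]
  map_add' := by
    intro a b
    funext i
    by_cases h : ew i.1 ≤ D <;> simp [h]

lemma thd_apply (D : Fin n →₀ ℕ) (v : ↥C → PR K m n) (i : ↥C) :
    thd K m n C D v i =
      if ew i.1 ≤ D then weightedHomogeneousComponent colw (D - ew i.1) (v i) else 0 := rfl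

lemma augV_apply (v : ↥C → PR K m n) :
    augV K m n C hC v = ∑ i : ↥C, v i * fm K m n C hC i := by
  rw [augV, Fintype.linearCombination_apply]
  exact Finset.sum_congr rfl (fun i _ => rfl)

lemma thd_ker (D : Fin n →₀ ℕ) (v : ↥C → PR K m n)
    (hv : v ∈ LinearMap.ker (augV K m n C hC)) :
    thd K m n C D v ∈ LinearMap.ker (augV K m n C hC) := by
  rw [LinearMap.mem_ker, augV_apply] at hv ⊢
  have hterm : ∀ i : ↥C, thd K m n C D v i * fm K m n C hC i =
      weightedHomogeneousComponent colw D (v i * fm K m n C hC i) := by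
    intro i
    rw [show fm K m n C hC i = mnr K m n i.1 (hC i.1 i.2) from rfl,
      whc_mul_homog K m n D (ew i.1) (v i) _ (mnr_weighted K m n i.1 (hC i.1 i.2)),
      thd_apply, ite_mul, zero_mul]
  rw [Finset.sum_congr rfl (fun i _ => hterm i), ← map_sum, hv, map_zero]

lemma thd_entry_wh (D : Fin n →₀ ℕ) (v : ↥C → PR K m n) (i : ↥C) :
    IsWeightedHomogeneous colw (thd K m n C D v i) (D - ew i.1) := by
  rw [thd_apply]
  by_cases h : ew i.1 ≤ D
  · rw [if_pos h]
    exact weightedHomogeneousComponent_isWeightedHomogeneous _ _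
  · rw [if_neg h]
    exact isWeightedHomogeneous_zero _ _ _

lemma thd_entry_zero (D : Fin n →₀ ℕ) (v : ↥C → PR K m n) (i : ↥C)
    (h : ¬ ew i.1 ≤ D) : thd K m n C D v i = 0 := by
  rw [thd_apply, if_neg h]

lemma thd_entry_hom (D : Fin n →₀ ℕ) (v : ↥C → PR K m n) (i : ↥C)
    (h : (v i).IsHomogeneous 1) : (thd K m n C D v i).IsHomogeneous 1 := by
  rw [thd_apply]
  by_cases hle : ew i.1 ≤ D
  · rw [if_pos hle]
    exact whc_isHomogeneous K m n h _
  · rw [if_neg hle]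
    exact isHomogeneous_zero _ _ _

lemma thd_decomp (v : ↥C → PR K m n) :
    ∃ 𝒟 : Finset (Fin n →₀ ℕ), v = ∑ D ∈ 𝒟, thd K m n C D v := by
  classical
  refine ⟨Finset.univ.biUnion (fun i : ↥C =>
    (Finset.image (· + ew i.1)
      (weightedHomogeneousComponent_finsupp (w := colw (m := m) (n := n)) (v i)).toFinset)), ?_⟩
  funext i
  rw [Finset.sum_apply]
  set P := (weightedHomogeneousComponent_finsupp (w := colw (m := m) (n := n)) (v i)).toFinset
    with hP
  set Im := P.image (· + ew i.1) with hIm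
  have hsub : Im ⊆ Finset.univ.biUnion (fun i' : ↥C =>
      (Finset.image (· + ew i'.1)
        (weightedHomogeneousComponent_finsupp (w := colw (m := m) (n := n)) (v i')).toFinset)) := by
    intro D hD
    exact Finset.mem_biUnion.mpr ⟨i, Finset.mem_univ i, hD⟩
  rw [← Finset.sum_subset hsub ?vanish]
  case vanish =>
    intro D _ hD
    rw [thd_apply]
    by_cases hle : ew i.1 ≤ D
    · rw [if_pos hle]
      by_contra hne
      apply hD
      rw [hIm]
      refine Finset.mem_image.mpr ⟨D - ew i.1, ?_, tsub_add_cancel_of_le hle⟩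
      rw [hP]
      exact (Set.Finite.mem_toFinset _).mpr hne
    · rw [if_neg hle]
  rw [hIm, Finset.sum_image (fun a _ b _ h => by
    have := congrArg (fun x => x - ew i.1) h
    simpa [add_tsub_cancel_right] using this)]
  have hterm : ∀ W ∈ P, thd K m n C (W + ew i.1) v i =
      weightedHomogeneousComponent colw W (v i) := by
    intro W _
    rw [thd_apply, if_pos le_add_self, add_tsub_cancel_right]
  rw [Finset.sum_congr rfl hterm]
  rw [← finsum_eq_sum _ (weightedHomogeneousComponent_finsupp (v i)),
    sum_weightedHomogeneousComponent]

lemma thd_smul (Dst D' : Fin n →₀ ℕ) (c : PR K m n) (u : ↥C → PR K m n)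
    (hu1 : ∀ i : ↥C, IsWeightedHomogeneous colw (u i) (D' - ew i.1))
    (hu2 : ∀ i : ↥C, ¬ ew i.1 ≤ D' → u i = 0) :
    thd K m n C Dst (c • u) =
      if D' ≤ Dst then (weightedHomogeneousComponent colw (Dst - D') c) • u else 0 := by
  funext i
  rw [thd_apply]
  have hcu : (c • u) i = c * u i := rfl
  by_cases h1 : ew i.1 ≤ Dst
  · rw [if_pos h1, hcu, whc_mul_homog K m n _ _ _ _ (hu1 i)]
    by_cases h2 : D' ≤ Dst
    · rw [if_pos h2]
      by_cases h3 : ew i.1 ≤ D'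
      · rw [if_pos (tsub_le_tsub_right h2 _), tsub_tsub_tsub_cancel_right h3]
        rfl
      · rw [hu2 i h3, mul_zero]
        have : ((weightedHomogeneousComponent colw (Dst - D')) c • u) i
            = (weightedHomogeneousComponent colw (Dst - D')) c * u i := rfl
        rw [this, hu2 i h3, mul_zero, ite_self]
    · rw [if_neg h2]
      by_cases h3 : ew i.1 ≤ D'
      · rw [if_neg, Pi.zero_apply]
        intro hcon
        apply h2
        intro x
        have hx := hcon x
        rw [Finsupp.tsub_apply, Finsupp.tsub_apply] at hx
        have h3x := h3 x
        have h1x := h1 x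
        omega
      · rw [hu2 i h3, mul_zero, ite_self, Pi.zero_apply]
  · rw [if_neg h1]
    by_cases h2 : D' ≤ Dst
    · rw [if_pos h2]
      have h3 : ¬ ew i.1 ≤ D' := fun hcon => h1 (hcon.trans h2)
      have : ((weightedHomogeneousComponent colw (Dst - D')) c • u) i
          = (weightedHomogeneousComponent colw (Dst - D')) c * u i := rfl
      rw [this, hu2 i h3, mul_zero]
    · rw [if_neg h2, Pi.zero_apply]

/-- the key vanishing: a column-pure linear syzygy in a multidegree supported in an
`(m+1)`-set one of whose `m`-subsets is not a circuit must vanish -/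
lemma pure_syz_zero (σs : Finset (Fin n)) (hσcard : σs.card = m + 1)
    (j₀ : Fin n) (hj₀ : j₀ ∈ σs) (hτC : σs.erase j₀ ∉ C)
    (D : Fin n →₀ ℕ) (hDsup : ∀ x : Fin n, 0 < D x → x ∈ σs)
    (u : ↥C → PR K m n) (hker : u ∈ LinearMap.ker (augV K m n C hC))
    (hu1 : ∀ i : ↥C, IsWeightedHomogeneous colw (u i) (D - ew i.1))
    (hu2 : ∀ i : ↥C, ¬ ew i.1 ≤ D → u i = 0)
    (hu3 : ∀ i : ↥C, (u i).IsHomogeneous 1) : u = 0 := by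
  classical
  funext i
  by_contra hne
  have hle : ew i.1 ≤ D := by
    by_contra hcon
    exact hne (hu2 i hcon)
  have hicard : (i.1 : Finset (Fin n)).card = m := hC i.1 i.2
  obtain ⟨j', hW, hsing⟩ := pure_support K m n (hu3 i) (hu1 i) hne
  have hDeq : D = Finsupp.single j' 1 + ew i.1 := (tsub_eq_iff_eq_add_of_le hle).mp hW
  have hisub : (i.1 : Finset (Fin n)) ⊆ σs := by
    intro x hx
    exact hDsup x (mem_of_ew_le hle hx)
  obtain ⟨ci, hci_mem, hci_not, hci_eq⟩ :=
    exists_erase_of_subset hisub (by rw [hσcard, hicard])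
  by_cases hj'mem : j' ∈ (i.1 : Finset (Fin n))
  · -- multiplicity-two case : u is concentrated in entry i
    have honly : ∀ i' : ↥C, u i' ≠ 0 → i' = i := by
      intro i' hne'
      have hle' : ew i'.1 ≤ D := by
        by_contra hcon
        exact hne' (hu2 i' hcon)
      have hsub' : (i'.1 : Finset (Fin n)) ⊆ i.1 := by
        intro x hx
        have h0 := mem_of_ew_le hle' hx
        rw [hDeq, Finsupp.add_apply] at h0
        by_contra hxi
        rw [ew_apply, if_neg hxi] at h0
        have : x = j' := by
          by_contra hxj
          rw [Finsupp.single_apply, if_neg (fun h => hxj h.symm)] at h0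
          omega
        exact hxi (this ▸ hj'mem)
      have : (i'.1 : Finset (Fin n)) = i.1 :=
        Finset.eq_of_subset_of_card_le hsub' (by rw [hC i'.1 i'.2, hicard])
      exact Subtype.ext this
    have hsum : (0 : PR K m n) = u i * fm K m n C hC i := by
      have h0 := LinearMap.mem_ker.mp hker
      rw [augV_apply] at h0
      rw [← h0]
      rw [Finset.sum_eq_single i]
      · intro b _ hb
        have : u b = 0 := by
          by_contra hbc
          exact hb (honly b hbc)
        rw [this, zero_mul]
      · intro hi
        exact absurd (Finset.mem_univ i) hi
    have := hsum.symm
    rcases mul_eq_zero.mp this with h | h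
    · exact hne h
    · exact mnr_ne_zero K m n i.1 (hC i.1 i.2) h
  · -- here j' = ci and D = ew σs
    have hj'σs : j' ∈ σs := by
      apply hDsup
      rw [hDeq, Finsupp.add_apply, Finsupp.single_apply, if_pos rfl]
      omega
    have hj'ci : j' = ci := by
      by_contra hcon
      exact hj'mem (hci_eq ▸ Finset.mem_erase.mpr ⟨hcon, hj'σs⟩)
    have hDσs : D = ew σs := by
      have hins : ew σs = ew (σs.erase ci) + Finsupp.single ci 1 := by
        conv_lhs => rw [← Finset.insert_erase hci_mem]
        exact ew_insert (Finset.notMem_erase ci σs)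
      rw [hDeq, hj'ci, hci_eq, hins, add_comm]
    have hcij₀ : ci ≠ j₀ := by
      intro hcon
      exact hτC (by rw [← hcon, ← hci_eq]; exact i.2)
    -- substitution kills all other entries' minors
    have hψ := congrArg (subst K m n j₀ ci) (LinearMap.mem_ker.mp hker)
    rw [augV_apply, map_sum, map_zero] at hψ
    have hψsum : ∑ i' : ↥C, subst K m n j₀ ci (u i' * fm K m n C hC i') =
        subst K m n j₀ ci (u i) * fm K m n C hC i := by
      rw [Finset.sum_eq_single i]
      · rw [map_mul]
        congr 1
        exact subst_mnr_id K m n _ (hj'ci ▸ hj'mem)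
      · intro b _ hb
        by_cases hub : u b = 0
        · rw [hub, zero_mul, map_zero]
        · -- b's circuit is σs.erase cb with cb ≠ ci, so contains both j₀ and ci
          have hleb : ew b.1 ≤ D := by
            by_contra hcon
            exact hub (hu2 b hcon)
          have hbsub : (b.1 : Finset (Fin n)) ⊆ σs := by
            intro x hx
            exact hDsup x (mem_of_ew_le hleb hx)
          obtain ⟨cb, hcb_mem, hcb_not, hcb_eq⟩ :=
            exists_erase_of_subset hbsub (by rw [hσcard, hC b.1 b.2])
          have hcbj₀ : cb ≠ j₀ := by
            intro hcon
            exact hτC (by rw [← hcon, ← hcb_eq]; exact b.2)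
          have hcbci : cb ≠ ci := by
            intro hcon
            apply hb
            apply Subtype.ext
            rw [hcb_eq, hci_eq, hcon]
          rw [map_mul]
          have : subst K m n j₀ ci (fm K m n C hC b) = 0 := by
            apply subst_mnr_zero K m n _ _ _ (Ne.symm hcij₀)
            · rw [hcb_eq]
              exact Finset.mem_erase.mpr ⟨fun h => hcbj₀ h.symm, hj₀⟩
            · rw [hcb_eq]
              exact Finset.mem_erase.mpr ⟨fun h => hcbci h.symm, hci_mem⟩
          rw [this, mul_zero]
      · intro hi
        exact absurd (Finset.mem_univ i) hi
    rw [hψsum] at hψ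
    rcases mul_eq_zero.mp hψ with h | h
    · -- subst kills u i, hence u i = 0
      apply hne
      exact subst_kill K m n (by rw [← hj'ci]; exact hsing) h
    · exact mnr_ne_zero K m n i.1 (hC i.1 i.2) h

theorem glue_step
    (hLP : ∀ z ∈ LinearMap.ker (augV K m n C hC),
      z ∈ Submodule.span (PR K m n) (linSyz K m n C hC))
    (hm : 0 < m)
    (τ₁ τ₂ : Finset (Fin n)) (h1 : τ₁ ∈ C) (h2 : τ₂ ∈ C)
    (hcard : (τ₁ ∩ τ₂).card + 1 = m)
    (τ : Finset (Fin n)) (hsub : τ ⊆ τ₁ ∪ τ₂) (hτc : τ.card = m) : τ ∈ C := by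
  classical
  by_contra hτC
  have hτ₁c : τ₁.card = m := hC τ₁ h1
  have hτ₂c : τ₂.card = m := hC τ₂ h2
  have hτ₁₂ : τ₁ ≠ τ₂ := by
    intro h
    rw [h, Finset.inter_self, hτ₂c] at hcard
    omega
  have hσcard : (τ₁ ∪ τ₂).card = m + 1 := by
    have hcc := Finset.card_union_add_card_inter τ₁ τ₂
    rw [hτ₁c, hτ₂c] at hcc
    omega
  obtain ⟨j₀, hj₀mem, hj₀not, hj₀eq⟩ := exists_erase_of_subset hsub (by rw [hσcard, hτc])
  rw [hj₀eq] at hτC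
  set i₁ : ↥C := ⟨τ₁, h1⟩ with hi₁
  set i₂ : ↥C := ⟨τ₂, h2⟩ with hi₂
  have hi₁₂ : i₁ ≠ i₂ := fun h => hτ₁₂ (congrArg Subtype.val h)
  set z : ↥C → PR K m n := fun i => if i = i₁ then mnr K m n τ₂ hτ₂c
    else if i = i₂ then -(mnr K m n τ₁ hτ₁c) else 0 with hzdef
  have hz1 : z i₁ = mnr K m n τ₂ hτ₂c := by rw [hzdef]; simp
  have hz2 : z i₂ = -(mnr K m n τ₁ hτ₁c) := by
    simp [hzdef, Ne.symm hi₁₂]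
  have hzelse : ∀ i : ↥C, i ≠ i₁ → i ≠ i₂ → z i = 0 := by
    intro i hA hB
    rw [hzdef]
    simp only [if_neg hA, if_neg hB]
  have hf₁ : fm K m n C hC i₁ = mnr K m n τ₁ hτ₁c := rfl
  have hf₂ : fm K m n C hC i₂ = mnr K m n τ₂ hτ₂c := rfl
  have hzker : z ∈ LinearMap.ker (augV K m n C hC) := by
    rw [LinearMap.mem_ker, augV_apply]
    have hpair : ∑ i : ↥C, z i * fm K m n C hC i
        = ∑ i ∈ ({i₁, i₂} : Finset ↥C), z i * fm K m n C hC i := by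
      symm
      apply Finset.sum_subset (Finset.subset_univ _)
      intro i _ hi
      simp only [Finset.mem_insert, Finset.mem_singleton] at hi
      push_neg at hi
      rw [hzelse i hi.1 hi.2, zero_mul]
    rw [hpair, Finset.sum_pair hi₁₂, hz1, hz2, hf₁, hf₂]
    ring
  set Dst : Fin n →₀ ℕ := ew τ₁ + ew τ₂ with hDst
  have hDsup : ∀ x : Fin n, 0 < Dst x → x ∈ τ₁ ∪ τ₂ := by
    intro x hx
    rw [hDst, Finsupp.add_apply, ew_apply, ew_apply] at hx
    by_contra hcon
    rw [Finset.mem_union] at hcon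
    push_neg at hcon
    rw [if_neg hcon.1, if_neg hcon.2] at hx
    omega
  have hzthd : thd K m n C Dst z = z := by
    funext i
    rw [thd_apply]
    by_cases hA : i = i₁
    · subst hA
      rw [if_pos (show ew (i₁.1 : Finset (Fin n)) ≤ Dst by rw [hDst]; exact self_le_add_right _ _)]
      have hsub1 : Dst - ew (i₁.1 : Finset (Fin n)) = ew τ₂ := by
        rw [hDst]
        exact add_tsub_cancel_left _ _
      rw [hsub1, hz1]
      exact (mnr_weighted K m n τ₂ hτ₂c).weightedHomogeneousComponent_same
    · by_cases hB : i = i₂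
      · subst hB
        rw [if_pos (show ew (i₂.1 : Finset (Fin n)) ≤ Dst by rw [hDst]; exact le_add_self)]
        have hsub2 : Dst - ew (i₂.1 : Finset (Fin n)) = ew τ₁ := by
          rw [hDst]
          exact add_tsub_cancel_right _ _
        rw [hsub2, hz2, map_neg]
        rw [(mnr_weighted K m n τ₁ hτ₁c).weightedHomogeneousComponent_same]
      · rw [hzelse i hA hB, map_zero, ite_self]
  obtain ⟨N, c, g, hrep⟩ := Submodule.mem_span_set'.mp (hLP z hzker)
  choose 𝒟 h𝒟 using fun q : Fin N => thd_decomp K m n C ((g q : ↥C → PR K m n))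
  have hz0 : z = 0 := by
    have h2 : thd K m n C Dst z = 0 := by
      rw [← hrep, map_sum]
      apply Finset.sum_eq_zero
      intro q _
      rw [h𝒟 q, Finset.smul_sum, map_sum]
      apply Finset.sum_eq_zero
      intro D _
      rw [thd_smul K m n C Dst D (c q) _
        (fun i => thd_entry_wh K m n C D _ i)
        (fun i hle => thd_entry_zero K m n C D _ i hle)]
      by_cases hDle : D ≤ Dst
      · rw [if_pos hDle]
        have hzero : thd K m n C D (g q : ↥C → PR K m n) = 0 := by
          apply pure_syz_zero K m n C hC (τ₁ ∪ τ₂) hσcard j₀ hj₀mem hτC D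
            (fun x hx => hDsup x (lt_of_lt_of_le hx (hDle x)))
            _ (thd_ker K m n C hC D _ (g q).2.1)
            (fun i => thd_entry_wh K m n C D _ i)
            (fun i hle => thd_entry_zero K m n C D _ i hle)
            (fun i => thd_entry_hom K m n C D _ i ((g q).2.2 i))
        rw [hzero, smul_zero]
      · rw [if_neg hDle]
    rw [← hzthd]
    exact h2
  have : mnr K m n τ₂ hτ₂c = 0 := by
    rw [← hz1, hz0]
    rfl
  exact mnr_ne_zero K m n τ₂ hτ₂c this

end

end DFIGlue
namespace DFIGlue

section PhaseII3

open MvPolynomial DirectSum Finset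

noncomputable section

variable (K : Type) [Field K] (σv : Type) [Fintype σv] [DecidableEq σv]

/-- a stage of the resolution construction -/
structure PStage where
  β : ℤ → ℕ
  hfin : (Function.support β).Finite
  Kv : Submodule (MvPolynomial σv K) (FreeMod K σv β)
  hgr : ∀ x ∈ Kv, ∀ t, fcomp K σv t x ∈ Kv
  hzc : ∀ x ∈ Kv, ZC x

/-- the data produced by one resolution step -/
structure StepOut (P : PStage K σv) where
  Q : PStage K σv
  gens : ∀ j : ℤ, Fin (Q.β j) → FreeMod K σv P.β
  hg1 : ∀ j k, gens j k ∈ fpiece K σv P.β j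
  hspan : Submodule.span (MvPolynomial σv K) {x | ∃ j k, gens j k = x} = P.Kv
  hrange : LinearMap.range (mkMap K σv gens) = P.Kv
  hgraded : ∀ t x, x ∈ fpiece K σv Q.β t → mkMap K σv gens x ∈ fpiece K σv P.β t
  hker : Q.Kv = LinearMap.ker (mkMap K σv gens)

/-- performing one resolution step -/
noncomputable def stepP (P : PStage K σv) : StepOut K σv P :=
  let e := stepEx K σv P.hfin P.Kv P.hgr P.hzc
  let β' := e.choose
  let e1 := e.choose_spec
  let hfin' := e1.choose
  let e2 := e1.choose_spec
  let g := e2.choose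
  let e3 := e2.choose_spec
  { Q := { β := β', hfin := hfin',
           Kv := LinearMap.ker (mkMap K σv g),
           hgr := fun x hx t => e3.2.2.2.1 x hx t,
           hzc := fun x hx => e3.2.2.2.2.1 x hx },
    gens := g,
    hg1 := e3.1,
    hspan := e3.2.1,
    hrange := e3.2.2.2.2.2,
    hgraded := e3.2.2.1,
    hker := rfl }

/-- the tower of stages -/
noncomputable def tower (P0 : PStage K σv) : ℕ → PStage K σv
  | 0 => P0
  | (i + 1) => (stepP K σv (tower P0 i)).Q

/-- the differentials -/
noncomputable def dmap (P0 : PStage K σv) (i : ℕ) :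
    FreeMod K σv (tower K σv P0 (i + 1)).β →ₗ[MvPolynomial σv K]
      FreeMod K σv (tower K σv P0 i).β :=
  mkMap K σv (stepP K σv (tower K σv P0 i)).gens

/-- assembling a minimal graded free resolution from the tower -/
noncomputable def buildRes (P0 : PStage K σv) {N : Type} [AddCommGroup N]
    [Module (MvPolynomial σv K) N] (deg : ℤ → AddSubgroup N)
    (aug0 : FreeMod K σv P0.β →ₗ[MvPolynomial σv K] N)
    (haug_graded : ∀ t x, x ∈ fpiece K σv P0.β t → aug0 x ∈ deg t)
    (haug_surj : Function.Surjective aug0)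
    (hker0 : P0.Kv = LinearMap.ker aug0) :
    MinFreeRes K σv N deg where
  β := fun i => (tower K σv P0 i).β
  hfin := fun i => (tower K σv P0 i).hfin
  d := fun i => dmap K σv P0 i
  aug := aug0
  graded_d := fun i t x hx => (stepP K σv (tower K σv P0 i)).hgraded t x hx
  graded_aug := haug_graded
  aug_surj := haug_surj
  exact_aug := by
    refine hker0.symm.trans ?_
    exact ((stepP K σv (tower K σv P0 0)).hrange).symm
  exact := fun i => by
    have h1 : LinearMap.ker (dmap K σv P0 i) = (tower K σv P0 (i + 1)).Kv :=
      ((stepP K σv (tower K σv P0 i)).hker).symm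
    have h2 : LinearMap.range (dmap K σv P0 (i + 1)) = (tower K σv P0 (i + 1)).Kv :=
      (stepP K σv (tower K σv P0 (i + 1))).hrange
    rw [h1, h2]
  minimal := fun i x j k => by
    have hx : dmap K σv P0 i x ∈ (tower K σv P0 i).Kv :=
      (stepP K σv (tower K σv P0 i)).hrange ▸ ⟨x, rfl⟩
    exact (tower K σv P0 i).hzc _ hx j k

end

end PhaseII3

section PhaseII4

open MvPolynomial DirectSum Finset

noncomputable section

variable (K : Type) [Field K] (m n : ℕ) (C : Set (Finset (Fin n)))
  (hC : ∀ c ∈ C, c.card = m)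

/-- the minors as elements of the determinantal facet ideal -/
def mnrJ (i : ↥C) : ↥(detFacetIdeal K m n C) :=
  ⟨fm K m n C hC i, Ideal.subset_span ⟨i.1, i.2, hC i.1 i.2, rfl⟩⟩

/-- the number of circuits -/
def NC : ℕ := Fintype.card ↥C

/-- an enumeration of the circuits -/
def eQ : Fin (NC n C) ≃ ↥C := (Fintype.equivFin ↥C).symm

/-- degrees of the base free module: everything sits in degree `m` -/
def β₀ : ℤ → ℕ := fun j => if j = (m : ℤ) then NC n C else 0

lemma hβ₀m : β₀ m n C (m : ℤ) = NC n C := if_pos rfl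

lemma β₀fin : (Function.support (β₀ m n C)).Finite := by
  apply Set.Finite.subset (Set.finite_singleton (m : ℤ))
  intro j hj
  by_contra hne
  rw [Set.mem_singleton_iff] at hne
  exact hj (show (if j = (m : ℤ) then NC n C else 0) = 0 from if_neg hne)

/-- the generators of the base free module map to the minors -/
def gJ : ∀ j : ℤ, Fin (β₀ m n C j) → ↥(detFacetIdeal K m n C) := fun j k =>
  if h : j = (m : ℤ) then
    mnrJ K m n C hC (eQ n C (Fin.cast (by rw [β₀, if_pos h]) k))
  else
    (Fin.cast (show β₀ m n C j = 0 by rw [β₀, if_neg h]) k).elim0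

lemma gJ_m (k : Fin (β₀ m n C (m : ℤ))) :
    gJ K m n C hC (m : ℤ) k
      = mnrJ K m n C hC (eQ n C (Fin.cast (hβ₀m m n C) k)) := by
  show (if h : (m : ℤ) = (m : ℤ) then
      mnrJ K m n C hC (eQ n C (Fin.cast (by rw [β₀, if_pos h]) k))
    else (Fin.cast (show β₀ m n C (m : ℤ) = 0 by rw [β₀, if_neg h]) k).elim0) = _
  rw [dif_pos rfl]

/-- the base augmentation -/
def augJ : FreeMod K (Fin m × Fin n) (β₀ m n C)
    →ₗ[MvPolynomial (Fin m × Fin n) K] ↥(detFacetIdeal K m n C) :=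
  mkMap K (Fin m × Fin n) (gJ K m n C hC)

lemma beta0_zero {j : ℤ} (hj : j ≠ (m : ℤ)) (k : Fin (β₀ m n C j)) : False := by
  have h1 : k.1 < (if j = (m : ℤ) then NC n C else 0) := k.isLt
  rw [if_neg hj] at h1
  omega

lemma freeMod0_eq_of (x : FreeMod K (Fin m × Fin n) (β₀ m n C)) :
    x = DirectSum.of (fun j => Fin (β₀ m n C j) → MvPolynomial (Fin m × Fin n) K)
      (m : ℤ) (x (m : ℤ)) := by
  apply DFinsupp.ext
  intro j
  by_cases hj : j = (m : ℤ)
  · subst hj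
    rw [DirectSum.of_eq_same]
  · rw [DirectSum.of_eq_of_ne _ _ _ hj]
    funext k
    exact (beta0_zero m n C hj k).elim

lemma augJ_apply (x : FreeMod K (Fin m × Fin n) (β₀ m n C)) :
    augJ K m n C hC x = ∑ k, x (m : ℤ) k • gJ K m n C hC (m : ℤ) k := by
  conv_lhs => rw [freeMod0_eq_of K m n C x]
  rw [augJ, mkMap_of]

lemma gJ_hom (j : ℤ) (k : Fin (β₀ m n C j)) :
    gJ K m n C hC j k ∈ idealDeg K (Fin m × Fin n) (detFacetIdeal K m n C) j := by
  by_cases hj : j = (m : ℤ)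
  · subst hj
    rw [gJ_m]
    show ((mnrJ K m n C hC _ : ↥(detFacetIdeal K m n C)) : MvPolynomial _ K)
      ∈ piece K (Fin m × Fin n) (m : ℤ)
    rw [mem_piece_iff K _ (by positivity), Int.toNat_natCast]
    exact mnr_homogeneous K m n _ _
  · exact (beta0_zero m n C hj k).elim

lemma idealDeg_smul (a b : ℤ) (p : MvPolynomial (Fin m × Fin n) K)
    (y : ↥(detFacetIdeal K m n C))
    (hp : p ∈ piece K (Fin m × Fin n) a)
    (hy : y ∈ idealDeg K (Fin m × Fin n) (detFacetIdeal K m n C) b) :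
    p • y ∈ idealDeg K (Fin m × Fin n) (detFacetIdeal K m n C) (a + b) := by
  rw [idealDeg, AddSubgroup.mem_comap] at hy ⊢
  have hco : ((detFacetIdeal K m n C).subtype.toAddMonoidHom) (p • y)
      = p * (((detFacetIdeal K m n C).subtype.toAddMonoidHom) y) := rfl
  rw [hco]
  exact piece_mul K _ hp hy

lemma augJ_graded : ∀ t x, x ∈ fpiece K (Fin m × Fin n) (β₀ m n C) t →
    augJ K m n C hC x ∈ idealDeg K (Fin m × Fin n) (detFacetIdeal K m n C) t :=
  fun t x hx => mkMap_graded K (Fin m × Fin n)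
    (idealDeg K (Fin m × Fin n) (detFacetIdeal K m n C))
    (idealDeg_smul K m n C) (gJ K m n C hC) (gJ_hom K m n C hC) t x hx

lemma augJ_surj : Function.Surjective (augJ K m n C hC) := by
  rw [← LinearMap.range_eq_top, augJ, mkMap_range]
  apply Submodule.map_injective_of_injective (detFacetIdeal K m n C).injective_subtype
  rw [Submodule.map_span, Submodule.map_top, Submodule.range_subtype]
  have himg : (detFacetIdeal K m n C).subtype ''
      {x | ∃ j k, gJ K m n C hC j k = x}
      = {f | ∃ τ ∈ C, ∃ h : τ.card = m, f = minorOn m n (genMatrix K m n) τ h} := by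
    ext f
    constructor
    · rintro ⟨y, ⟨j, k, rfl⟩, rfl⟩
      by_cases hj : j = (m : ℤ)
      · subst hj
        rw [gJ_m]
        set i := eQ n C (Fin.cast (hβ₀m m n C) k)
        exact ⟨i.1, i.2, hC i.1 i.2, rfl⟩
      · exact (beta0_zero m n C hj k).elim
    · rintro ⟨τ, hτ, h, rfl⟩
      refine ⟨mnrJ K m n C hC ⟨τ, hτ⟩, ⟨(m : ℤ),
        Fin.cast (hβ₀m m n C).symm ((eQ n C).symm ⟨τ, hτ⟩), ?_⟩, rfl⟩
      rw [gJ_m]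
      congr 1
      have : Fin.cast (hβ₀m m n C) (Fin.cast (hβ₀m m n C).symm ((eQ n C).symm ⟨τ, hτ⟩))
          = (eQ n C).symm ⟨τ, hτ⟩ := by
        apply Fin.ext
        simp
      rw [this, Equiv.apply_symm_apply]
  rw [himg]
  rfl

end

end PhaseII4

section PhaseII5

open MvPolynomial DirectSum Finset

noncomputable section

variable (K : Type) [Field K] (m n : ℕ) (C : Set (Finset (Fin n)))
  (hC : ∀ c ∈ C, c.card = m)

lemma mem_idealDeg_iff (t : ℤ) (y : ↥(detFacetIdeal K m n C)) :
    y ∈ idealDeg K (Fin m × Fin n) (detFacetIdeal K m n C) t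
      ↔ (y : MvPolynomial (Fin m × Fin n) K) ∈ piece K (Fin m × Fin n) t := by
  rw [idealDeg, AddSubgroup.mem_comap]
  rfl

lemma idealDeg_direct (T : Finset ℤ) (yf : ℤ → ↥(detFacetIdeal K m n C))
    (hy : ∀ t ∈ T, yf t ∈ idealDeg K (Fin m × Fin n) (detFacetIdeal K m n C) t)
    (hsum : ∑ t ∈ T, yf t = 0) : ∀ t₀ ∈ T, yf t₀ = 0 := by
  intro t₀ ht₀
  have hS : ∑ t ∈ T, ((yf t : MvPolynomial (Fin m × Fin n) K)) = 0 := by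
    have := congrArg (fun y : ↥(detFacetIdeal K m n C) =>
      (y : MvPolynomial (Fin m × Fin n) K)) hsum
    simpa using this
  have := piece_direct K (Fin m × Fin n) T
    (fun t => (yf t : MvPolynomial (Fin m × Fin n) K))
    (fun t ht => (mem_idealDeg_iff K m n C t (yf t)).mp (hy t ht)) hS t₀ ht₀
  exact Subtype.ext this

lemma baseKer_gr : ∀ x ∈ LinearMap.ker (augJ K m n C hC), ∀ t,
    fcomp K (Fin m × Fin n) t x ∈ LinearMap.ker (augJ K m n C hC) := by
  intro x hx t
  obtain ⟨Tx, hTx0, hTx1⟩ := fcomp_decomp K (Fin m × Fin n) x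
  have hxt : ∀ s ∈ Tx, augJ K m n C hC (fcomp K (Fin m × Fin n) s x)
      ∈ idealDeg K (Fin m × Fin n) (detFacetIdeal K m n C) s :=
    fun s _ => augJ_graded K m n C hC s _ (fcomp_mem K (Fin m × Fin n) s x)
  have hsum : ∑ s ∈ Tx, augJ K m n C hC (fcomp K (Fin m × Fin n) s x) = 0 := by
    rw [← map_sum, ← hTx1]
    exact LinearMap.mem_ker.mp hx
  have hzero := idealDeg_direct K m n C Tx
    (fun s => augJ K m n C hC (fcomp K (Fin m × Fin n) s x)) hxt hsum
  by_cases ht : t ∈ Tx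
  · exact LinearMap.mem_ker.mpr (hzero t ht)
  · rw [hTx0 t ht]
    exact Submodule.zero_mem _

lemma baseKer_zc : ∀ x ∈ LinearMap.ker (augJ K m n C hC), ZC x := by
  classical
  have hhom : ∀ (s : ℤ) (z : FreeMod K (Fin m × Fin n) (β₀ m n C)),
      z ∈ fpiece K (Fin m × Fin n) (β₀ m n C) s → augJ K m n C hC z = 0 → ZC z := by
    intro s z hzp hzk j₀ k₀
    by_contra hc0
    by_cases hj₀ : j₀ = (m : ℤ)
    swap
    · exact (beta0_zero m n C hj₀ k₀).elim
    subst hj₀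
    have hmem := hzp (m : ℤ) k₀
    have hsm : s - (m : ℤ) = 0 := by
      by_contra hne
      exact hc0 (piece_smul_constantCoeff K (Fin m × Fin n) hne hmem)
    have hCk : ∀ k : Fin (β₀ m n C (m : ℤ)),
        z (m : ℤ) k = MvPolynomial.C (constantCoeff (z (m : ℤ) k)) := by
      intro k
      apply piece_zero_eq_C K (Fin m × Fin n)
      rw [← hsm]
      exact hzp (m : ℤ) k
    have hexp : (0 : MvPolynomial (Fin m × Fin n) K)
        = ∑ k, (z (m : ℤ) k) * fm K m n C hC (eQ n C (Fin.cast (hβ₀m m n C) k)) := by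
      have h1 := augJ_apply K m n C hC z
      rw [hzk] at h1
      have h2 := congrArg (fun y : ↥(detFacetIdeal K m n C) =>
        (y : MvPolynomial (Fin m × Fin n) K)) h1
      simp only at h2
      rw [AddSubmonoidClass.coe_finset_sum] at h2
      have h3 : ∀ k : Fin (β₀ m n C (m : ℤ)),
          ((z (m : ℤ) k • gJ K m n C hC (m : ℤ) k : ↥(detFacetIdeal K m n C))
            : MvPolynomial (Fin m × Fin n) K)
          = (z (m : ℤ) k) * fm K m n C hC (eQ n C (Fin.cast (hβ₀m m n C) k)) := by
        intro k
        rw [gJ_m]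
        rfl
      rw [Finset.sum_congr rfl (fun k _ => h3 k)] at h2
      simpa using h2
    set i₀ := eQ n C (Fin.cast (hβ₀m m n C) k₀) with hi₀
    have hcoeff := congrArg (coeff (diagm m n i₀.1 (hC i₀.1 i₀.2))) hexp
    rw [coeff_zero, coeff_sum] at hcoeff
    have hterm : ∀ k : Fin (β₀ m n C (m : ℤ)),
        coeff (diagm m n i₀.1 (hC i₀.1 i₀.2))
          ((z (m : ℤ) k) * fm K m n C hC (eQ n C (Fin.cast (hβ₀m m n C) k)))
        = if k = k₀ then constantCoeff (z (m : ℤ) k₀) else 0 := by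
      intro k
      rw [hCk k]
      rw [coeff_C_mul]
      by_cases hk : k = k₀
      · subst hk
        rw [if_pos rfl]
        have : coeff (diagm m n i₀.1 (hC i₀.1 i₀.2))
            (fm K m n C hC (eQ n C (Fin.cast (hβ₀m m n C) k))) = 1 := by
          rw [← hi₀]
          exact coeff_diag_self K m n i₀.1 (hC i₀.1 i₀.2)
        rw [this, mul_one]
      · rw [if_neg hk]
        set ik := eQ n C (Fin.cast (hβ₀m m n C) k)
        have hik : ik ≠ i₀ := by
          intro hcon
          apply hk
          have h4 := (eQ n C).injective (hi₀ ▸ hcon)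
          have h5 := congrArg Fin.val h4
          exact Fin.ext h5
        have hττ : i₀.1 ≠ ik.1 := by
          intro hcon
          exact hik (Subtype.ext hcon.symm)
        have hfm : fm K m n C hC ik = mnr K m n ik.1 (hC ik.1 ik.2) := rfl
        rw [hfm, coeff_diag_other K m n i₀.1 ik.1 (hC i₀.1 i₀.2) (hC ik.1 ik.2) hττ, mul_zero]
    rw [Finset.sum_congr rfl (fun k _ => hterm k)] at hcoeff
    rw [Finset.sum_ite_eq' Finset.univ k₀
      (fun _ => constantCoeff (z (m : ℤ) k₀)), if_pos (Finset.mem_univ k₀)] at hcoeff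
    exact hc0 hcoeff.symm
  intro x hx j k
  obtain ⟨Tx, hTx0, hTx1⟩ := fcomp_decomp K (Fin m × Fin n) x
  have hxcomp : x j k = ∑ s ∈ Tx, (fcomp K (Fin m × Fin n) s x) j k := by
    conv_lhs => rw [hTx1]
    rw [DFinsupp.finset_sum_apply, Finset.sum_apply]
  rw [hxcomp, map_sum]
  apply Finset.sum_eq_zero
  intro s hs
  exact hhom s (fcomp K (Fin m × Fin n) s x) (fcomp_mem K (Fin m × Fin n) s x)
    (LinearMap.mem_ker.mp (baseKer_gr K m n C hC x hx s)) j k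

/-- the base stage of the resolution of the determinantal facet ideal -/
def baseStage : PStage K (Fin m × Fin n) :=
  ⟨β₀ m n C, β₀fin m n C, LinearMap.ker (augJ K m n C hC),
    baseKer_gr K m n C hC, baseKer_zc K m n C hC⟩

/-- the minimal graded free resolution of the determinantal facet ideal -/
def theRes : MinFreeRes K (Fin m × Fin n) (↥(detFacetIdeal K m n C))
    (idealDeg K (Fin m × Fin n) (detFacetIdeal K m n C)) :=
  buildRes K (Fin m × Fin n) (baseStage K m n C hC)
    (idealDeg K (Fin m × Fin n) (detFacetIdeal K m n C))
    (augJ K m n C hC) (augJ_graded K m n C hC) (augJ_surj K m n C hC) rfl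

/-- reading off the syzygy vector of a base-module element -/
def piL : FreeMod K (Fin m × Fin n) (β₀ m n C)
    →ₗ[MvPolynomial (Fin m × Fin n) K] (↥C → MvPolynomial (Fin m × Fin n) K) where
  toFun x := fun i => x (m : ℤ) (Fin.cast (hβ₀m m n C).symm ((eQ n C).symm i))
  map_add' := by
    intro a b
    funext i
    show (a + b) (m : ℤ) (Fin.cast (hβ₀m m n C).symm ((eQ n C).symm i))
      = a (m : ℤ) (Fin.cast (hβ₀m m n C).symm ((eQ n C).symm i))
        + b (m : ℤ) (Fin.cast (hβ₀m m n C).symm ((eQ n C).symm i))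
    rw [DirectSum.add_apply]
    rfl
  map_smul' := by
    intro r a
    funext i
    rfl

lemma piL_of (v : Fin (β₀ m n C (m : ℤ)) → MvPolynomial (Fin m × Fin n) K) (i : ↥C) :
    piL K m n C (DirectSum.of (fun j => Fin (β₀ m n C j) → MvPolynomial (Fin m × Fin n) K)
      (m : ℤ) v) i = v (Fin.cast (hβ₀m m n C).symm ((eQ n C).symm i)) := by
  show (DirectSum.of (fun j => Fin (β₀ m n C j) → MvPolynomial (Fin m × Fin n) K)
      (m : ℤ) v) (m : ℤ) (Fin.cast (hβ₀m m n C).symm ((eQ n C).symm i))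
    = v (Fin.cast (hβ₀m m n C).symm ((eQ n C).symm i))
  rw [DirectSum.of_eq_same]

lemma augV_piL (x : FreeMod K (Fin m × Fin n) (β₀ m n C)) :
    augV K m n C hC (piL K m n C x) = ((augJ K m n C hC x : ↥(detFacetIdeal K m n C))
      : MvPolynomial (Fin m × Fin n) K) := by
  rw [augV_apply, augJ_apply, AddSubmonoidClass.coe_finset_sum]
  have hterm : ∀ k, ((x (m : ℤ) k • gJ K m n C hC (m : ℤ) k
        : ↥(detFacetIdeal K m n C)) : MvPolynomial (Fin m × Fin n) K)
      = (x (m : ℤ) k) * fm K m n C hC (eQ n C (Fin.cast (hβ₀m m n C) k)) := by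
    intro k
    rw [gJ_m]
    rfl
  rw [Finset.sum_congr rfl (fun k _ => hterm k)]
  refine (Fintype.sum_equiv ((finCongr (hβ₀m m n C)).trans (eQ n C))
    (fun k => (x (m : ℤ) k) * fm K m n C hC (eQ n C (Fin.cast (hβ₀m m n C) k)))
    (fun i => piL K m n C x i * fm K m n C hC i) ?_).symm
  intro k
  have h1 : piL K m n C x (((finCongr (hβ₀m m n C)).trans (eQ n C)) k) = x (m : ℤ) k := by
    have hf : (Fin.cast (hβ₀m m n C).symm
        ((eQ n C).symm (((finCongr (hβ₀m m n C)).trans (eQ n C)) k))) = k := by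
      rw [Equiv.trans_apply, Equiv.symm_apply_apply]
      apply Fin.ext
      simp
    show x (m : ℤ) (Fin.cast (hβ₀m m n C).symm
      ((eQ n C).symm (((finCongr (hβ₀m m n C)).trans (eQ n C)) k))) = x (m : ℤ) k
    rw [hf]
  show x (m : ℤ) k * fm K m n C hC (eQ n C (Fin.cast (hβ₀m m n C) k))
    = piL K m n C x (((finCongr (hβ₀m m n C)).trans (eQ n C)) k)
      * fm K m n C hC (((finCongr (hβ₀m m n C)).trans (eQ n C)) k)
  rw [h1, Equiv.trans_apply, finCongr_apply]

theorem kerAug_linear (hm : 0 < m)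
    (hpres : ∀ Res : MinFreeRes K (Fin m × Fin n) (↥(detFacetIdeal K m n C))
        (idealDeg K (Fin m × Fin n) (detFacetIdeal K m n C)),
      ∀ j : ℤ, j ≠ (m : ℤ) + 1 → Res.β 1 j = 0) :
    ∀ z ∈ LinearMap.ker (augV K m n C hC),
      z ∈ Submodule.span (PR K m n) (linSyz K m n C hC) := by
  classical
  intro z hz
  have hres := hpres (theRes K m n C hC)
  set SO := stepP K (Fin m × Fin n) (baseStage K m n C hC) with hSO
  have hβ1 : ∀ j : ℤ, j ≠ (m : ℤ) + 1 → SO.Q.β j = 0 := by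
    intro j hj
    exact hres j hj
  set x : FreeMod K (Fin m × Fin n) (β₀ m n C) :=
    DirectSum.of (fun j => Fin (β₀ m n C j) → MvPolynomial (Fin m × Fin n) K) (m : ℤ)
      (fun k => z (eQ n C (Fin.cast (hβ₀m m n C) k))) with hx
  have hπx : piL K m n C x = z := by
    funext i
    rw [hx, piL_of]
    congr 1
    have hf : Fin.cast (hβ₀m m n C) (Fin.cast (hβ₀m m n C).symm ((eQ n C).symm i))
        = (eQ n C).symm i := by
      apply Fin.ext
      simp
    rw [hf, Equiv.apply_symm_apply]
  have hxker : x ∈ LinearMap.ker (augJ K m n C hC) := by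
    rw [LinearMap.mem_ker]
    apply Subtype.ext
    have h1 := augV_piL K m n C hC x
    rw [hπx] at h1
    have h2 := LinearMap.mem_ker.mp hz
    rw [h2] at h1
    exact h1.symm
  have hxspan : x ∈ Submodule.span (MvPolynomial (Fin m × Fin n) K)
      {y | ∃ j k, SO.gens j k = y} := by
    rw [SO.hspan]
    exact hxker
  obtain ⟨Nq, c, gq, hrep⟩ := (Submodule.mem_span_set' (M := FreeMod K (Fin m × Fin n) (baseStage K m n C hC).β)).mp hxspan
  have hz_eq : z = ∑ q, c q • piL K m n C (((gq q : FreeMod K (Fin m × Fin n) (baseStage K m n C hC).β) : FreeMod K (Fin m × Fin n) (β₀ m n C))) := by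
    rw [← hπx, ← hrep]
    exact (map_sum (piL K m n C) _ _).trans (Finset.sum_congr rfl (fun q _ => map_smul _ _ _))
  rw [hz_eq]
  apply Submodule.sum_mem
  intro q _
  apply Submodule.smul_mem
  apply Submodule.subset_span
  obtain ⟨j, k, hgen⟩ := (gq q).2
  have hj : j = (m : ℤ) + 1 := by
    by_contra hj
    have h0 := hβ1 j hj
    exact absurd k.isLt (by omega)
  subst hj
  have hker : ((gq q : FreeMod K (Fin m × Fin n) (baseStage K m n C hC).β) : FreeMod K (Fin m × Fin n) (β₀ m n C))
      ∈ LinearMap.ker (augJ K m n C hC) := by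
    have h1 : ((gq q : FreeMod K (Fin m × Fin n) (baseStage K m n C hC).β) : FreeMod K (Fin m × Fin n) (β₀ m n C))
        ∈ Submodule.span (MvPolynomial (Fin m × Fin n) K) {y | ∃ j k, SO.gens j k = y} :=
      Submodule.subset_span (gq q).2
    rw [SO.hspan] at h1
    exact h1
  constructor
  · rw [LinearMap.mem_ker]
    refine (augV_piL K m n C hC _).trans ?_
    exact congrArg Subtype.val (show augJ K m n C hC _ = 0 from hker)
  · intro i
    have hfp : ((gq q : FreeMod K (Fin m × Fin n) (baseStage K m n C hC).β) : FreeMod K (Fin m × Fin n) (β₀ m n C))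
        ∈ fpiece K (Fin m × Fin n) (β₀ m n C) ((m : ℤ) + 1) := by
      rw [← hgen]
      exact SO.hg1 ((m : ℤ) + 1) k
    have hcomp := hfp (m : ℤ) (Fin.cast (hβ₀m m n C).symm ((eQ n C).symm i))
    rw [show ((m : ℤ) + 1) - (m : ℤ) = 1 by ring] at hcomp
    rw [mem_piece_iff K (Fin m × Fin n) (by norm_num)] at hcomp
    exact hcomp

end

end PhaseII5

end DFIGlue
/-- If the determinantal facet ideal `J_C` of an `m`-uniform clutter `C` is linearly
presented, then for any two cliques `σ₁, σ₂` of `C` with `|σ₁ ∩ σ₂| ≥ m - 1`, the union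
`σ₁ ∪ σ₂` is again a clique of `C`. -/
theorem linearly_presented_cliques_glue
    (K : Type) [Field K] (m n : ℕ) (hm : 0 < m)
    (C : Set (Finset (Fin n))) (hC : ∀ c ∈ C, c.card = m)
    (hver : ∀ v : Fin n, ∃ c ∈ C, v ∈ c)
    (hpres : ∀ Res : MinFreeRes K (Fin m × Fin n) (↥(detFacetIdeal K m n C))
        (idealDeg K (Fin m × Fin n) (detFacetIdeal K m n C)),
      ∀ j : ℤ, j ≠ (m : ℤ) + 1 → Res.β 1 j = 0)
    (σ₁ σ₂ : Finset (Fin n))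
    (h1 : σ₁ ∈ cliqueComplex m n C) (h2 : σ₂ ∈ cliqueComplex m n C)
    (hint : m - 1 ≤ (σ₁ ∩ σ₂).card) :
    σ₁ ∪ σ₂ ∈ cliqueComplex m n C := by
  classical
  have glue : ∀ τ₁ ∈ C, ∀ τ₂ ∈ C, (τ₁ ∩ τ₂).card + 1 = m →
      ∀ τ ⊆ τ₁ ∪ τ₂, τ.card = m → τ ∈ C := by
    intro τ₁ ht1 τ₂ ht2 hcard τ hsub hτc
    exact DFIGlue.glue_step K m n C hC
      (DFIGlue.kerAug_linear K m n C hC hm hpres) hm τ₁ τ₂ ht1 ht2 hcard τ hsub hτc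
  obtain ⟨ρ, hρsub, hρcard⟩ := Finset.exists_subset_card_eq hint
  -- base case: circuits containing ρ
  have hbase : ∀ τ : Finset (Fin n), τ ⊆ σ₁ ∪ σ₂ → τ.card = m → ρ ⊆ τ → τ ∈ C := by
    intro τ hsub hcard hρτ
    have hd : (τ \ ρ).card = 1 := by
      rw [Finset.card_sdiff_of_subset hρτ, hcard, hρcard]
      omega
    obtain ⟨j, hj⟩ := Finset.card_eq_one.mp hd
    have hτeq : τ = insert j ρ := by
      have h1' : τ = (τ \ ρ) ∪ ρ := (Finset.sdiff_union_of_subset hρτ).symm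
      rw [h1', hj]
      ext x; simp [Finset.mem_insert, or_comm]
    have hjτ : j ∈ τ := by
      have : j ∈ τ \ ρ := by rw [hj]; exact Finset.mem_singleton_self j
      exact (Finset.mem_sdiff.mp this).1
    rcases Finset.mem_union.mp (hsub hjτ) with hj1 | hj2
    · refine h1 τ ?_ hcard
      rw [hτeq]
      exact Finset.insert_subset hj1 (hρsub.trans Finset.inter_subset_left)
    · refine h2 τ ?_ hcard
      rw [hτeq]
      exact Finset.insert_subset hj2 (hρsub.trans Finset.inter_subset_right)
  have main : ∀ r : ℕ, ∀ τ : Finset (Fin n), τ ⊆ σ₁ ∪ σ₂ → τ.card = m →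
      (ρ \ τ).card ≤ r → τ ∈ C := by
    intro r
    induction r with
    | zero =>
      intro τ hsub hcard hle
      have : ρ ⊆ τ := by
        rw [← Finset.sdiff_eq_empty_iff_subset]
        exact Finset.card_eq_zero.mp (Nat.le_zero.mp hle)
      exact hbase τ hsub hcard this
    | succ r ih =>
      intro τ hsub hcard hle
      by_cases h0 : (ρ \ τ).card = 0
      · exact hbase τ hsub hcard
          (Finset.sdiff_eq_empty_iff_subset.mp (Finset.card_eq_zero.mp h0))
      · -- pick c ∈ ρ \ τ and two distinct elements j j' of τ \ ρ
        obtain ⟨c, hc⟩ := Finset.card_pos.mp (Nat.pos_of_ne_zero h0)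
        have hcρ : c ∈ ρ := (Finset.mem_sdiff.mp hc).1
        have hcτ : c ∉ τ := (Finset.mem_sdiff.mp hc).2
        have hcount : 2 ≤ (τ \ ρ).card := by
          have e1 : (τ ∩ ρ).card + (τ \ ρ).card = m := by
            rw [Finset.card_inter_add_card_sdiff, hcard]
          have e2 : (ρ ∩ τ).card + (ρ \ τ).card = m - 1 := by
            rw [Finset.card_inter_add_card_sdiff, hρcard]
          have e3 : (τ ∩ ρ).card = (ρ ∩ τ).card := by rw [Finset.inter_comm]
          have hρτpos : 1 ≤ (ρ \ τ).card := Nat.pos_of_ne_zero h0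
          omega
        obtain ⟨j, hj, j', hj', hjj'⟩ := Finset.one_lt_card.mp hcount
        have hjτ : j ∈ τ := (Finset.mem_sdiff.mp hj).1
        have hj'τ : j' ∈ τ := (Finset.mem_sdiff.mp hj').1
        set τ₁ := insert c (τ.erase j) with hτ₁
        set τ₂ := insert c (τ.erase j') with hτ₂
        have hcsub : c ∈ σ₁ ∪ σ₂ :=
          Finset.mem_union_left _ (hρsub.trans Finset.inter_subset_left hcρ)
        have hsub₁ : τ₁ ⊆ σ₁ ∪ σ₂ :=
          Finset.insert_subset hcsub ((Finset.erase_subset _ _).trans hsub)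
        have hsub₂ : τ₂ ⊆ σ₁ ∪ σ₂ :=
          Finset.insert_subset hcsub ((Finset.erase_subset _ _).trans hsub)
        have hcard₁ : τ₁.card = m := by
          rw [hτ₁, Finset.card_insert_of_notMem (fun hmem => hcτ (Finset.erase_subset _ _ hmem)),
            Finset.card_erase_of_mem hjτ, hcard]
          omega
        have hcard₂ : τ₂.card = m := by
          rw [hτ₂, Finset.card_insert_of_notMem (fun hmem => hcτ (Finset.erase_subset _ _ hmem)),
            Finset.card_erase_of_mem hj'τ, hcard]
          omega
        have hdiff : ∀ j₀ : Fin n, j₀ ∈ τ \ ρ → (ρ \ insert c (τ.erase j₀)).card ≤ r := by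
          intro j₀ hj₀
          have hss : ρ \ insert c (τ.erase j₀) ⊆ (ρ \ τ).erase c := by
            intro x hx
            obtain ⟨hxρ, hxτ'⟩ := Finset.mem_sdiff.mp hx
            have hxc : x ≠ c := fun h => hxτ' (by rw [h]; exact Finset.mem_insert_self c _)
            refine Finset.mem_erase.mpr ⟨hxc, Finset.mem_sdiff.mpr ⟨hxρ, fun hxτ => hxτ' ?_⟩⟩
            have hxj : x ≠ j₀ := fun h => (Finset.mem_sdiff.mp hj₀).2 (h ▸ hxρ)
            exact Finset.mem_insert_of_mem (Finset.mem_erase.mpr ⟨hxj, hxτ⟩)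
          have hcc := Finset.card_le_card hss
          rw [Finset.card_erase_of_mem hc] at hcc
          omega
        have ht1C : τ₁ ∈ C := ih τ₁ hsub₁ hcard₁ (hdiff j hj)
        have ht2C : τ₂ ∈ C := ih τ₂ hsub₂ hcard₂ (hdiff j' hj')
        have hj'ej : j' ∈ τ.erase j := Finset.mem_erase.mpr ⟨fun h => hjj' (h.symm), hj'τ⟩
        have hi : τ₁ ∩ τ₂ = insert c ((τ.erase j).erase j') := by
          ext x
          simp only [hτ₁, hτ₂, Finset.mem_inter, Finset.mem_insert, Finset.mem_erase]
          tauto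
        have hicard : (τ₁ ∩ τ₂).card + 1 = m := by
          rw [hi, Finset.card_insert_of_notMem (fun hmem => hcτ
            (Finset.erase_subset _ _ (Finset.erase_subset _ _ hmem))),
            Finset.card_erase_of_mem hj'ej, Finset.card_erase_of_mem hjτ, hcard]
          have h2m : 2 ≤ m := by
            calc 2 ≤ (τ \ ρ).card := hcount
              _ ≤ τ.card := Finset.card_le_card (Finset.sdiff_subset)
              _ = m := hcard
          omega
        have huni : τ ⊆ τ₁ ∪ τ₂ := by
          intro x hx
          by_cases hxj : x = j
          · exact Finset.mem_union_right _ (Finset.mem_insert_of_mem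
              (Finset.mem_erase.mpr ⟨fun h => hjj' ((hxj.symm.trans h).symm ▸ rfl), hx⟩))
          · exact Finset.mem_union_left _ (Finset.mem_insert_of_mem
              (Finset.mem_erase.mpr ⟨hxj, hx⟩))
        exact glue τ₁ ht1C τ₂ ht2C hicard τ huni hcard
  intro τ hsub hτc
  exact main ((ρ \ τ).card) τ hsub hτc le_rfl
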